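/- arXiv:1301.2170 — 8 statements merged into one kernel-verified Lean document; each statement's English description precedes it below -/
import Mathlib

section
/- Let p(a₁,a₂|x₁,x₂) be any non-signalling bipartite conditional probability distribution (nonnegative, normalized, non-signalling), with outcomes aₖ ∈ Fin Aₖ and inputs xₖ ∈ Fin Xₖ, where Aₖ ≥ 1, Xₖ ≥ 1. Define hidden-variable sets Λₖ = Fin Aₖ × Fin Xₖ, and set q((a₁',x₁'),(a₂',x₂')) = p(a₁',a₂'|x₁',x₂')/(X₁·X₂), and p̃ₖ(aₖ|xₖ,(a',x')) = Xₖ·δ_{(a',x'),(aₖ,xₖ)} if aₖ < Aₖ-1, and p̃ₖ(aₖ|xₖ,(a',x')) = 1 − ∑_{a<Aₖ-1} Xₖ·δ_{(a',x'),(a,xₖ)} if aₖ = Aₖ-1. Then q is a probability distribution, each p̃ₖ is a conditional quasiprobability distribution, and p(a₁,a₂|x₁,x₂) = ∑_{λ₁,λ₂} p̃₁(a₁|x₁,λ₁)·p̃₂(a₂|x₂,λ₂)·q(λ₁,λ₂) for all a₁,a₂,x₁,x₂. -/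
/-- The quasi-deterministic local measurement distribution of Theorem 1. -/
def qmeas (A X : ℕ) (a : Fin A) (x : Fin X) (lam : Fin A × Fin X) : ℝ :=
  if (a : ℕ) < A - 1 then (if lam = (a, x) then (X : ℝ) else 0)
  else 1 - ∑ a' : Fin A,
    (if (a' : ℕ) < A - 1 then (if lam = (a', x) then (X : ℝ) else 0) else 0)

lemma qmeas_norm {A X : ℕ} (hA : 1 ≤ A) (x : Fin X) (l : Fin A × Fin X) :
    ∑ a : Fin A, qmeas A X a x l = 1 := by
  set top : Fin A := ⟨A - 1, by omega⟩ with htop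
  set S : ℝ := ∑ a' : Fin A,
      (if (a' : ℕ) < A - 1 then (if l = (a', x) then (X : ℝ) else 0) else 0) with hS
  have hpt : ∀ a : Fin A, qmeas A X a x l =
      (if (a : ℕ) < A - 1 then (if l = (a, x) then (X : ℝ) else 0) else 0)
      + (if a = top then 1 - S else 0) := by
    intro a
    by_cases h : (a : ℕ) < A - 1
    · have hne : a ≠ top := by
        intro he; rw [he] at h; simp [top] at h
      simp [qmeas, h, hne]
    · have he : a = top := by
        have := a.isLt; ext1; simp [top]; omega
      simp [qmeas, h, he, hS, top]
  rw [Finset.sum_congr rfl (fun a _ => hpt a), Finset.sum_add_distrib, ← hS,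
    Finset.sum_ite_eq' Finset.univ top (fun _ => 1 - S)]
  simp

lemma qmeas_key {A X : ℕ} (hA : 1 ≤ A) (hX : 1 ≤ X) (a : Fin A) (x : Fin X)
    (g : Fin A × Fin X → ℝ)
    (hg : ∀ x' : Fin X, ∑ a' : Fin A, g (a', x') = ∑ a' : Fin A, g (a', x)) :
    ∑ l : Fin A × Fin X, qmeas A X a x l * g l = (X : ℝ) * g (a, x) := by
  have htot : ∑ l : Fin A × Fin X, g l = (X : ℝ) * ∑ a' : Fin A, g (a', x) := by
    rw [Fintype.sum_prod_type, Finset.sum_comm]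
    rw [Finset.sum_congr rfl (fun x' _ => hg x')]
    simp [Finset.sum_const, nsmul_eq_mul]
  by_cases h : (a : ℕ) < A - 1
  · simp only [qmeas, if_pos h]
    simp only [ite_mul, zero_mul]
    rw [Finset.sum_ite_eq' Finset.univ (a, x) (fun l => (X : ℝ) * g l)]
    simp
  · simp only [qmeas, if_neg h]
    have hstep : ∀ l : Fin A × Fin X,
        (1 - ∑ a' : Fin A,
          (if (a' : ℕ) < A - 1 then (if l = (a', x) then (X : ℝ) else 0) else 0)) * g l
        = g l - ∑ a' : Fin A,
          (if (a' : ℕ) < A - 1 then (if l = (a', x) then (X : ℝ) * g l else 0) else 0) := by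
      intro l
      rw [sub_mul, one_mul, Finset.sum_mul]
      congr 1
      refine Finset.sum_congr rfl (fun a' _ => ?_)
      by_cases h1 : (a' : ℕ) < A - 1 <;> by_cases h2 : l = (a', x) <;> simp [h1, h2]
    rw [Finset.sum_congr rfl (fun l _ => hstep l), Finset.sum_sub_distrib, htot,
      Finset.sum_comm]
    have hinner : ∀ a' : Fin A,
        ∑ l : Fin A × Fin X,
          (if (a' : ℕ) < A - 1 then (if l = (a', x) then (X : ℝ) * g l else 0) else 0)
        = (if (a' : ℕ) < A - 1 then (X : ℝ) * g (a', x) else 0) := by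
      intro a'
      by_cases h1 : (a' : ℕ) < A - 1
      · simp only [if_pos h1]
        rw [Finset.sum_ite_eq' Finset.univ (a', x) (fun l => (X : ℝ) * g l)]
        simp
      · simp [h1]
    rw [Finset.sum_congr rfl (fun a' _ => hinner a')]
    -- now: X * ∑ a', g (a', x) - ∑ a', (if a' < A-1 then X * g (a',x) else 0) = X * g (a,x)
    have hae : (a : ℕ) = A - 1 := by have := a.isLt; omega
    have hsplit : ∀ a' : Fin A, (X : ℝ) * g (a', x) =
        (if (a' : ℕ) < A - 1 then (X : ℝ) * g (a', x) else 0)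
        + (if a' = a then (X : ℝ) * g (a, x) else 0) := by
      intro a'
      by_cases h1 : (a' : ℕ) < A - 1
      · have : a' ≠ a := by intro he; rw [he] at h1; omega
        simp [h1, this]
      · have he : a' = a := by have := a'.isLt; ext1; omega
        rw [he, if_neg h, if_pos rfl, zero_add]
    rw [Finset.mul_sum, Finset.sum_congr rfl (fun a' _ => hsplit a'), Finset.sum_add_distrib,
      Finset.sum_ite_eq' Finset.univ a (fun _ => (X : ℝ) * g (a, x))]
    simp

/-- Theorem 1 construction (bipartite): the explicit hidden state distribution and
quasi-measurements reproduce any non-signalling distribution. -/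
theorem stmt2 {A₁ A₂ X₁ X₂ : ℕ}
    (hA₁ : 1 ≤ A₁) (hA₂ : 1 ≤ A₂) (hX₁ : 1 ≤ X₁) (hX₂ : 1 ≤ X₂)
    (p : Fin A₁ → Fin A₂ → Fin X₁ → Fin X₂ → ℝ)
    (hp0 : ∀ a₁ a₂ x₁ x₂, 0 ≤ p a₁ a₂ x₁ x₂)
    (hnorm : ∀ x₁ x₂, ∑ a₁, ∑ a₂, p a₁ a₂ x₁ x₂ = 1)
    (hNS2 : ∀ a₁ x₁ x₂ x₂', ∑ a₂, p a₁ a₂ x₁ x₂ = ∑ a₂, p a₁ a₂ x₁ x₂')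
    (hNS1 : ∀ a₂ x₂ x₁ x₁', ∑ a₁, p a₁ a₂ x₁ x₂ = ∑ a₁, p a₁ a₂ x₁' x₂) :
    (∀ (l₁ : Fin A₁ × Fin X₁) (l₂ : Fin A₂ × Fin X₂),
      0 ≤ p l₁.1 l₂.1 l₁.2 l₂.2 / ((X₁ : ℝ) * (X₂ : ℝ))) ∧
    (∑ l₁ : Fin A₁ × Fin X₁, ∑ l₂ : Fin A₂ × Fin X₂,
      p l₁.1 l₂.1 l₁.2 l₂.2 / ((X₁ : ℝ) * (X₂ : ℝ)) = 1) ∧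
    (∀ x₁ l₁, ∑ a₁, qmeas A₁ X₁ a₁ x₁ l₁ = 1) ∧
    (∀ x₂ l₂, ∑ a₂, qmeas A₂ X₂ a₂ x₂ l₂ = 1) ∧
    (∀ a₁ a₂ x₁ x₂, p a₁ a₂ x₁ x₂ =
      ∑ l₁ : Fin A₁ × Fin X₁, ∑ l₂ : Fin A₂ × Fin X₂,
        qmeas A₁ X₁ a₁ x₁ l₁ * qmeas A₂ X₂ a₂ x₂ l₂ *
          (p l₁.1 l₂.1 l₁.2 l₂.2 / ((X₁ : ℝ) * (X₂ : ℝ)))) := by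
  have hX₁0 : (X₁ : ℝ) ≠ 0 := by positivity
  have hX₂0 : (X₂ : ℝ) ≠ 0 := by positivity
  refine ⟨?_, ?_, ?_, ?_, ?_⟩
  · intro l₁ l₂
    apply div_nonneg (hp0 _ _ _ _)
    positivity
  · set x₂0 : Fin X₂ := ⟨0, hX₂⟩
    have h1 : ∀ (a₁ : Fin A₁) (x₁' : Fin X₁),
        ∑ l₂ : Fin A₂ × Fin X₂, p a₁ l₂.1 x₁' l₂.2 =
          (X₂ : ℝ) * ∑ a₂, p a₁ a₂ x₁' x₂0 := by
      intro a₁ x₁'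
      rw [Fintype.sum_prod_type, Finset.sum_comm,
        Finset.sum_congr rfl (fun x₂' _ => hNS2 a₁ x₁' x₂' x₂0)]
      simp [Finset.sum_const, nsmul_eq_mul]
    have htot : ∑ l₁ : Fin A₁ × Fin X₁, ∑ l₂ : Fin A₂ × Fin X₂,
        p l₁.1 l₂.1 l₁.2 l₂.2 = (X₁ : ℝ) * (X₂ : ℝ) := by
      rw [Finset.sum_congr rfl (fun l₁ _ => h1 l₁.1 l₁.2), Fintype.sum_prod_type,
        Finset.sum_comm]
      have hx : ∀ x₁' : Fin X₁, ∑ a₁, (X₂ : ℝ) * ∑ a₂, p a₁ a₂ x₁' x₂0 = (X₂ : ℝ) := by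
        intro x₁'
        rw [← Finset.mul_sum, hnorm x₁' x₂0, mul_one]
      rw [Finset.sum_congr rfl (fun x₁' _ => hx x₁')]
      simp [Finset.sum_const, nsmul_eq_mul, mul_comm]
    simp_rw [← Finset.sum_div]
    rw [htot, div_self (by positivity)]
  · intro x₁ l₁; exact qmeas_norm hA₁ x₁ l₁
  · intro x₂ l₂; exact qmeas_norm hA₂ x₂ l₂
  · intro a₁ a₂ x₁ x₂
    have hinner : ∀ l₁ : Fin A₁ × Fin X₁,
        ∑ l₂ : Fin A₂ × Fin X₂, qmeas A₂ X₂ a₂ x₂ l₂ *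
          (p l₁.1 l₂.1 l₁.2 l₂.2 / ((X₁ : ℝ) * (X₂ : ℝ)))
        = (X₂ : ℝ) * (p l₁.1 a₂ l₁.2 x₂ / ((X₁ : ℝ) * (X₂ : ℝ))) := by
      intro l₁
      exact qmeas_key hA₂ hX₂ a₂ x₂ _ (fun x₂' => by
        rw [← Finset.sum_div, ← Finset.sum_div, hNS2 l₁.1 l₁.2 x₂' x₂])
    have houter : ∑ l₁ : Fin A₁ × Fin X₁, qmeas A₁ X₁ a₁ x₁ l₁ *
          ((X₂ : ℝ) * (p l₁.1 a₂ l₁.2 x₂ / ((X₁ : ℝ) * (X₂ : ℝ))))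
        = (X₁ : ℝ) * ((X₂ : ℝ) * (p a₁ a₂ x₁ x₂ / ((X₁ : ℝ) * (X₂ : ℝ)))) := by
      exact qmeas_key hA₁ hX₁ a₁ x₁
        (fun l₁ => (X₂ : ℝ) * (p l₁.1 a₂ l₁.2 x₂ / ((X₁ : ℝ) * (X₂ : ℝ))))
        (fun x₁' => by
          simp only [← Finset.mul_sum, ← Finset.sum_div]
          rw [hNS1 a₂ x₂ x₁' x₁])
    calc p a₁ a₂ x₁ x₂
        = (X₁ : ℝ) * ((X₂ : ℝ) * (p a₁ a₂ x₁ x₂ / ((X₁ : ℝ) * (X₂ : ℝ)))) := by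
          field_simp
      _ = ∑ l₁ : Fin A₁ × Fin X₁, qmeas A₁ X₁ a₁ x₁ l₁ *
            ((X₂ : ℝ) * (p l₁.1 a₂ l₁.2 x₂ / ((X₁ : ℝ) * (X₂ : ℝ)))) := houter.symm
      _ = ∑ l₁ : Fin A₁ × Fin X₁, ∑ l₂ : Fin A₂ × Fin X₂,
            qmeas A₁ X₁ a₁ x₁ l₁ * qmeas A₂ X₂ a₂ x₂ l₂ *
              (p l₁.1 l₂.1 l₁.2 l₂.2 / ((X₁ : ℝ) * (X₂ : ℝ))) := by
          refine Finset.sum_congr rfl (fun l₁ _ => ?_)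
          rw [← hinner l₁, Finset.mul_sum]
          exact Finset.sum_congr rfl (fun l₂ _ => by ring)
end

section
/- A bipartite conditional probability distribution p(a₁,a₂|x₁,x₂) is non-signalling if and only if it can be written as p(a₁,a₂|x₁,x₂) = ∑_{λ₁,λ₂} p̃₁(a₁|x₁,λ₁)·p̃₂(a₂|x₂,λ₂)·q(λ₁,λ₂) for some finite types Λ₁, Λ₂, some probability distribution q on Λ₁ × Λ₂, and conditional quasiprobability distributions p̃₁, p̃₂ (real-valued, summing to 1 over outcomes). -/
private lemma diag_sum' {n : ℕ} (P₁ P₂ w : Fin n → ℝ) :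
    ∑ l₁, ∑ l₂, P₁ l₁ * P₂ l₂ * (if l₁ = l₂ then w l₁ else 0) = ∑ l, P₁ l * P₂ l * w l := by
  refine Finset.sum_congr rfl fun l₁ _ => ?_
  rw [Finset.sum_eq_single l₁]
  · rw [if_pos rfl]
  · intro b _ hb
    rw [if_neg (fun h => hb h.symm), mul_zero]
  · intro h; exact absurd (Finset.mem_univ l₁) h

/-- Theorem 1 (bipartite): p is non-signalling iff it admits a local model with a
genuine probability distribution over hidden states and local quasiprobability
measurement distributions. -/
theorem stmt3 {A₁ A₂ X₁ X₂ : ℕ}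
    (hA₁ : 1 ≤ A₁) (hA₂ : 1 ≤ A₂) (hX₁ : 1 ≤ X₁) (hX₂ : 1 ≤ X₂)
    (p : Fin A₁ → Fin A₂ → Fin X₁ → Fin X₂ → ℝ)
    (hp0 : ∀ a₁ a₂ x₁ x₂, 0 ≤ p a₁ a₂ x₁ x₂)
    (hnorm : ∀ x₁ x₂, ∑ a₁, ∑ a₂, p a₁ a₂ x₁ x₂ = 1) :
    ((∀ a₁ x₁ x₂ x₂', ∑ a₂, p a₁ a₂ x₁ x₂ = ∑ a₂, p a₁ a₂ x₁ x₂') ∧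
     (∀ a₂ x₂ x₁ x₁', ∑ a₁, p a₁ a₂ x₁ x₂ = ∑ a₁, p a₁ a₂ x₁' x₂)) ↔
    ∃ (n₁ n₂ : ℕ) (q : Fin n₁ → Fin n₂ → ℝ)
      (p₁ : Fin A₁ → Fin X₁ → Fin n₁ → ℝ) (p₂ : Fin A₂ → Fin X₂ → Fin n₂ → ℝ),
      (∀ l₁ l₂, 0 ≤ q l₁ l₂) ∧ (∑ l₁, ∑ l₂, q l₁ l₂ = 1) ∧
      (∀ x₁ l₁, ∑ a₁, p₁ a₁ x₁ l₁ = 1) ∧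
      (∀ x₂ l₂, ∑ a₂, p₂ a₂ x₂ l₂ = 1) ∧
      (∀ a₁ a₂ x₁ x₂, p a₁ a₂ x₁ x₂ =
        ∑ l₁, ∑ l₂, p₁ a₁ x₁ l₁ * p₂ a₂ x₂ l₂ * q l₁ l₂) := by
  classical
  have hX₁0 : 0 < X₁ := hX₁
  have hX₂0 : 0 < X₂ := hX₂
  have hA₁R : (A₁ : ℝ) ≠ 0 := by positivity
  set K : ℕ := A₁ * X₁ with hK
  have hK0 : 0 < K := Nat.mul_pos hA₁ hX₁
  have hKR : (K : ℝ) ≠ 0 := by positivity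
  constructor
  · rintro ⟨hns₁, hns₂⟩
    -- marginals
    set m₁ : Fin A₁ → Fin X₁ → ℝ := fun a x => ∑ a₂, p a a₂ x ⟨0, hX₂0⟩ with hm₁
    set m₂ : Fin A₂ → Fin X₂ → ℝ := fun a x => ∑ a₁, p a₁ a ⟨0, hX₁0⟩ x with hm₂
    set T : Fin A₁ → Fin X₁ → Fin A₂ → Fin X₂ → ℝ :=
      fun a₁ x₁ a₂ x₂ => p a₁ a₂ x₁ x₂ - m₁ a₁ x₁ * m₂ a₂ x₂ with hT
    have hm₁sum : ∀ x₁, ∑ a₁, m₁ a₁ x₁ = 1 := fun x₁ => hnorm x₁ _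
    have hm₂sum : ∀ x₂, ∑ a₂, m₂ a₂ x₂ = 1 := by
      intro x₂
      rw [hm₂]
      rw [Finset.sum_comm]
      exact hnorm _ x₂
    have hT₁ : ∀ x₁ a₂ x₂, ∑ a₁, T a₁ x₁ a₂ x₂ = 0 := by
      intro x₁ a₂ x₂
      simp only [hT, Finset.sum_sub_distrib, ← Finset.sum_mul, hm₁sum, one_mul]
      rw [hns₂ a₂ x₂ x₁ ⟨0, hX₁0⟩]
      simp [hm₂]
    have hT₂ : ∀ a₁ x₁ x₂, ∑ a₂, T a₁ x₁ a₂ x₂ = 0 := by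
      intro a₁ x₁ x₂
      simp only [hT, Finset.sum_sub_distrib, ← Finset.mul_sum, hm₂sum, mul_one]
      rw [hns₁ a₁ x₁ x₂ ⟨0, hX₂0⟩]
      simp [hm₁]
    -- hidden-variable ingredients
    set e : Fin A₁ × Fin X₁ ≃ Fin K := finProdFinEquiv with he
    set u : Fin A₁ → Fin X₁ → Fin A₁ × Fin X₁ → ℝ :=
      fun a x z => if x = z.2 then ((if a = z.1 then (1:ℝ) else 0) - 1 / A₁) else 0 with hu
    set v : Fin A₂ → Fin X₂ → Fin A₁ × Fin X₁ → ℝ :=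
      fun a x z => T z.1 z.2 a x with hv
    have husum : ∀ x (z : Fin A₁ × Fin X₁), ∑ a, u a x z = 0 := by
      intro x z
      by_cases hxz : x = z.2
      · simp only [hu, hxz, if_true, if_pos rfl]
        rw [Finset.sum_sub_distrib]
        simp only [Finset.sum_ite_eq, Finset.mem_univ, if_pos, Finset.sum_const,
          Finset.card_univ, Fintype.card_fin, nsmul_eq_mul]
        field_simp
        simp
      · simp [hu, hxz]
    have hUsum : ∀ a x, ∑ z : Fin A₁ × Fin X₁, u a x z = 0 := by
      intro a x
      rw [Fintype.sum_prod_type_right]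
      have : ∀ y : Fin X₁, (∑ b : Fin A₁, u a x (b, y)) = 0 := by
        intro y
        by_cases hxy : x = y
        · simp only [hu, hxy, if_true, if_pos rfl]
          rw [Finset.sum_sub_distrib]
          simp only [Finset.sum_ite_eq, Finset.mem_univ, if_pos, Finset.sum_const,
            Finset.card_univ, Fintype.card_fin, nsmul_eq_mul]
          field_simp
          simp
        · simp [hu, hxy]
      simp [this]
    have hVsum : ∀ a x, ∑ z : Fin A₁ × Fin X₁, v a x z = 0 := by
      intro a x
      rw [Fintype.sum_prod_type_right]
      simp [hv, hT₁]
    have hWsum : ∀ a₁ x₁ a₂ x₂,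
        ∑ z : Fin A₁ × Fin X₁, u a₁ x₁ z * v a₂ x₂ z = T a₁ x₁ a₂ x₂ := by
      intro a₁ x₁ a₂ x₂
      rw [Fintype.sum_prod_type_right]
      have step : ∀ y : Fin X₁, (∑ b : Fin A₁, u a₁ x₁ (b, y) * v a₂ x₂ (b, y)) =
          if x₁ = y then (∑ b : Fin A₁, ((if a₁ = b then (1:ℝ) else 0) - 1 / A₁) * T b y a₂ x₂) else 0 := by
        intro y
        by_cases hxy : x₁ = y
        · simp [hu, hv, hxy]
        · simp [hu, hv, hxy]
      rw [Finset.sum_congr rfl fun y _ => step y, Finset.sum_ite_eq, if_pos (Finset.mem_univ x₁)]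
      rw [Finset.sum_congr rfl (fun b _ => by rw [sub_mul]), Finset.sum_sub_distrib]
      rw [← Finset.mul_sum, hT₁, mul_zero, sub_zero]
      simp [Finset.sum_ite_eq]
    -- the model
    refine ⟨K + 1, K + 1,
      fun l₁ l₂ => if l₁ = l₂ then (if l₁ = 0 then 1 / 2 else 1 / (2 * K)) else 0,
      fun a x l => m₁ a x + Fin.cases 0 (fun k => u a x (e.symm k)) l,
      fun a x l => m₂ a x + Fin.cases 0 (fun k => (2 * K) * v a x (e.symm k)) l,
      ?_, ?_, ?_, ?_, ?_⟩
    · intro l₁ l₂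
      dsimp only
      split_ifs <;> positivity
    · have inner : ∀ l₁ : Fin (K + 1),
          (∑ l₂ : Fin (K + 1), if l₁ = l₂ then (if l₁ = 0 then (1:ℝ) / 2 else 1 / (2 * K)) else 0)
            = (if l₁ = 0 then (1:ℝ) / 2 else 1 / (2 * K)) := by
        intro l₁
        rw [Finset.sum_ite_eq, if_pos (Finset.mem_univ l₁)]
      rw [Finset.sum_congr rfl fun l₁ _ => inner l₁]
      rw [Fin.sum_univ_succ]
      simp only [if_pos rfl]
      have : ∀ k : Fin K, (if (Fin.succ k : Fin (K+1)) = 0 then (1:ℝ) / 2 else 1 / (2 * K))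
          = 1 / (2 * K) := fun k => if_neg (Fin.succ_ne_zero k)
      rw [Finset.sum_congr rfl fun k _ => this k, Finset.sum_const, Finset.card_univ,
        Fintype.card_fin, nsmul_eq_mul]
      field_simp
      norm_num
    · intro x₁ l₁
      rw [Finset.sum_add_distrib, hm₁sum]
      induction l₁ using Fin.cases with
      | zero => simp
      | succ k =>
        simp only [Fin.cases_succ]
        rw [husum x₁ (e.symm k)]
        norm_num
    · intro x₂ l₂
      rw [Finset.sum_add_distrib, hm₂sum]
      induction l₂ using Fin.cases with
      | zero => simp
      | succ k =>
        simp only [Fin.cases_succ]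
        rw [← Finset.mul_sum]
        have : ∑ a₂, v a₂ x₂ (e.symm k) = 0 := by simp [hv, hT₂]
        rw [this]
        norm_num
    · intro a₁ a₂ x₁ x₂
      rw [diag_sum']
      rw [Fin.sum_univ_succ]
      simp only [Fin.cases_zero, Fin.cases_succ, add_zero, if_pos rfl,
        if_neg (Fin.succ_ne_zero _)]
      have hsucc : ∑ k : Fin K,
          (m₁ a₁ x₁ + u a₁ x₁ (e.symm k)) * (m₂ a₂ x₂ + 2 * (K:ℝ) * v a₂ x₂ (e.symm k))
            * (1 / (2 * K)) = m₁ a₁ x₁ * m₂ a₂ x₂ * (1 / 2) + T a₁ x₁ a₂ x₂ := by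
        rw [Equiv.sum_comp e.symm
          (fun z => (m₁ a₁ x₁ + u a₁ x₁ z) * (m₂ a₂ x₂ + 2 * (K:ℝ) * v a₂ x₂ z) * (1 / (2 * K)))]
        have expand : ∀ z : Fin A₁ × Fin X₁,
            (m₁ a₁ x₁ + u a₁ x₁ z) * (m₂ a₂ x₂ + 2 * (K:ℝ) * v a₂ x₂ z) * (1 / (2 * K)) =
            m₁ a₁ x₁ * m₂ a₂ x₂ * (1 / (2 * K)) + u a₁ x₁ z * (m₂ a₂ x₂ * (1 / (2 * K)))
              + m₁ a₁ x₁ * v a₂ x₂ z + u a₁ x₁ z * v a₂ x₂ z := by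
          intro z
          field_simp
          ring
        rw [Finset.sum_congr rfl fun z _ => expand z]
        rw [Finset.sum_add_distrib, Finset.sum_add_distrib, Finset.sum_add_distrib]
        have hcard : Fintype.card (Fin A₁ × Fin X₁) = K := by simp [hK]
        have hA : ∑ _z : Fin A₁ × Fin X₁, m₁ a₁ x₁ * m₂ a₂ x₂ * (1 / (2 * (K:ℝ)))
            = m₁ a₁ x₁ * m₂ a₂ x₂ * (1 / 2) := by
          rw [Finset.sum_const, Finset.card_univ, hcard, nsmul_eq_mul]
          field_simp
        have hB : ∑ z : Fin A₁ × Fin X₁, u a₁ x₁ z * (m₂ a₂ x₂ * (1 / (2 * (K:ℝ)))) = 0 := by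
          rw [← Finset.sum_mul, hUsum, zero_mul]
        have hC : ∑ z : Fin A₁ × Fin X₁, m₁ a₁ x₁ * v a₂ x₂ z = 0 := by
          rw [← Finset.mul_sum, hVsum, mul_zero]
        rw [hA, hB, hC, hWsum]
        ring
      rw [hsucc]
      have : T a₁ x₁ a₂ x₂ = p a₁ a₂ x₁ x₂ - m₁ a₁ x₁ * m₂ a₂ x₂ := rfl
      rw [this]
      simp only [eq_self_iff_true, if_true]
      ring
  · rintro ⟨n₁, n₂, q, p₁, p₂, hq0, hqsum, hp₁, hp₂, heq⟩
    constructor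
    · intro a₁ x₁ x₂ x₂'
      have key : ∀ y : Fin X₂, ∑ a₂, p a₁ a₂ x₁ y = ∑ l₁, ∑ l₂, p₁ a₁ x₁ l₁ * q l₁ l₂ := by
        intro y
        simp only [heq]
        rw [Finset.sum_comm]
        refine Finset.sum_congr rfl fun l₁ _ => ?_
        rw [Finset.sum_comm]
        refine Finset.sum_congr rfl fun l₂ _ => ?_
        calc ∑ a₂, p₁ a₁ x₁ l₁ * p₂ a₂ y l₂ * q l₁ l₂
            = (∑ a₂, p₂ a₂ y l₂) * (p₁ a₁ x₁ l₁ * q l₁ l₂) := by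
              rw [Finset.sum_mul]; exact Finset.sum_congr rfl fun a₂ _ => by ring
          _ = p₁ a₁ x₁ l₁ * q l₁ l₂ := by rw [hp₂, one_mul]
      rw [key x₂, key x₂']
    · intro a₂ x₂ x₁ x₁'
      have key : ∀ y : Fin X₁, ∑ a₁, p a₁ a₂ y x₂ = ∑ l₁, ∑ l₂, p₂ a₂ x₂ l₂ * q l₁ l₂ := by
        intro y
        simp only [heq]
        rw [Finset.sum_comm]
        refine Finset.sum_congr rfl fun l₁ _ => ?_
        rw [Finset.sum_comm]
        refine Finset.sum_congr rfl fun l₂ _ => ?_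
        calc ∑ a₁, p₁ a₁ y l₁ * p₂ a₂ x₂ l₂ * q l₁ l₂
            = (∑ a₁, p₁ a₁ y l₁) * (p₂ a₂ x₂ l₂ * q l₁ l₂) := by
              rw [Finset.sum_mul]; exact Finset.sum_congr rfl fun a₁ _ => by ring
          _ = p₂ a₂ x₂ l₂ * q l₁ l₂ := by rw [hp₁, one_mul]
      rw [key x₁, key x₁']
end

section
/- A bipartite conditional probability distribution p(a₁,a₂|x₁,x₂) is non-signalling if and only if it can be written as p(a₁,a₂|x₁,x₂) = ∑_{λ₁,λ₂} p₁(a₁|x₁,λ₁)·p₂(a₂|x₂,λ₂)·q̃(λ₁,λ₂) for some finite types Λ₁, Λ₂, some quasiprobability distribution q̃ on Λ₁ × Λ₂ (real-valued, summing to 1, possibly negative), and genuine conditional probability distributions p₁, p₂ (nonnegative, summing to 1 over outcomes). -/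
noncomputable def dU {A X : ℕ} (a : Fin A) (x : Fin X) (m : Fin A × Fin X) : ℝ :=
  if m.2 = x then (if m.1 = a then 1 else 0) else (A:ℝ)⁻¹

lemma dU_nonneg {A X : ℕ} (a : Fin A) (x : Fin X) (m : Fin A × Fin X) :
    (0:ℝ) ≤ dU a x m := by
  unfold dU; split_ifs <;> positivity

lemma dU_sum {A X : ℕ} (hA : 0 < A) (x : Fin X) (m : Fin A × Fin X) :
    ∑ a : Fin A, dU a x m = 1 := by
  unfold dU
  by_cases h : m.2 = x
  · simp [h, Finset.sum_ite_eq]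
  · simp only [h, if_false, Finset.sum_const, Finset.card_univ, Fintype.card_fin,
      nsmul_eq_mul]
    field_simp

lemma aux1 {A X : ℕ} (hA : 0 < A) (a : Fin A) (x : Fin X)
    (g : Fin A × Fin X → ℝ) (c : ℝ) (hc : ∀ y, ∑ b, g (b, y) = c) :
    ∑ m : Fin A × Fin X, dU a x m * g m = g (a, x) + ((X:ℝ) - 1) / A * c := by
  have hX : 0 < X := x.pos
  unfold dU
  rw [Fintype.sum_prod_type]
  rw [Finset.sum_comm]
  have hstep : ∀ y : Fin X,
      (∑ b : Fin A, (if y = x then (if b = a then (1:ℝ) else 0) else (A:ℝ)⁻¹) * g (b, y))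
      = (A:ℝ)⁻¹ * c + if y = x then g (a, x) - (A:ℝ)⁻¹ * c else 0 := by
    intro y
    by_cases h : y = x
    · simp only [h, if_true]
      rw [show (∑ b : Fin A, (if b = a then (1:ℝ) else 0) * g (b, x))
          = ∑ b : Fin A, (if b = a then g (b, x) else 0) by
        apply Finset.sum_congr rfl; intro b _; split_ifs <;> simp]
      rw [Finset.sum_ite_eq' Finset.univ a (fun b => g (b, x))]
      simp only [Finset.mem_univ, if_true]
      ring
    · simp only [h, if_false, add_zero]
      rw [← Finset.mul_sum, hc y]
  calc ∑ y : Fin X, ∑ b : Fin A,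
        (if y = x then (if b = a then (1:ℝ) else 0) else (A:ℝ)⁻¹) * g (b, y)
      = ∑ y : Fin X, ((A:ℝ)⁻¹ * c + if y = x then g (a, x) - (A:ℝ)⁻¹ * c else 0) := by
        exact Finset.sum_congr rfl fun y _ => hstep y
    _ = (X:ℝ) * ((A:ℝ)⁻¹ * c) + (g (a, x) - (A:ℝ)⁻¹ * c) := by
        rw [Finset.sum_add_distrib, Finset.sum_const, Finset.card_univ, Fintype.card_fin,
          nsmul_eq_mul, Finset.sum_ite_eq' Finset.univ x]
        simp
    _ = g (a, x) + ((X:ℝ) - 1) / A * c := by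
        field_simp
        ring

noncomputable def qdef {A₁ A₂ X₁ X₂ : ℕ} (p : Fin A₁ → Fin A₂ → Fin X₁ → Fin X₂ → ℝ)
    (x₁0 : Fin X₁) (x₂0 : Fin X₂) (m₁ : Fin A₁ × Fin X₁) (m₂ : Fin A₂ × Fin X₂) : ℝ :=
  p m₁.1 m₂.1 m₁.2 m₂.2
    - ((X₂:ℝ) - 1) / ((A₂:ℝ) * (X₂:ℝ)) * ∑ b₂, p m₁.1 b₂ m₁.2 x₂0
    - ((X₁:ℝ) - 1) / ((A₁:ℝ) * (X₁:ℝ)) * ∑ b₁, p b₁ m₂.1 x₁0 m₂.2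
    + ((X₁:ℝ) - 1) / ((A₁:ℝ) * (X₁:ℝ)) * (((X₂:ℝ) - 1) / ((A₂:ℝ) * (X₂:ℝ)))

/-- Theorem 2 (bipartite): p is non-signalling iff it admits a local model with a
quasiprobability distribution over hidden states and genuine local conditional
probability distributions. -/
theorem stmt4 {A₁ A₂ X₁ X₂ : ℕ}
    (hA₁ : 1 ≤ A₁) (hA₂ : 1 ≤ A₂) (hX₁ : 1 ≤ X₁) (hX₂ : 1 ≤ X₂)
    (p : Fin A₁ → Fin A₂ → Fin X₁ → Fin X₂ → ℝ)
    (hp0 : ∀ a₁ a₂ x₁ x₂, 0 ≤ p a₁ a₂ x₁ x₂)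
    (hnorm : ∀ x₁ x₂, ∑ a₁, ∑ a₂, p a₁ a₂ x₁ x₂ = 1) :
    ((∀ a₁ x₁ x₂ x₂', ∑ a₂, p a₁ a₂ x₁ x₂ = ∑ a₂, p a₁ a₂ x₁ x₂') ∧
     (∀ a₂ x₂ x₁ x₁', ∑ a₁, p a₁ a₂ x₁ x₂ = ∑ a₁, p a₁ a₂ x₁' x₂)) ↔
    ∃ (n₁ n₂ : ℕ) (q : Fin n₁ → Fin n₂ → ℝ)
      (p₁ : Fin A₁ → Fin X₁ → Fin n₁ → ℝ) (p₂ : Fin A₂ → Fin X₂ → Fin n₂ → ℝ),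
      (∑ l₁, ∑ l₂, q l₁ l₂ = 1) ∧
      (∀ a₁ x₁ l₁, 0 ≤ p₁ a₁ x₁ l₁) ∧ (∀ a₂ x₂ l₂, 0 ≤ p₂ a₂ x₂ l₂) ∧
      (∀ x₁ l₁, ∑ a₁, p₁ a₁ x₁ l₁ = 1) ∧
      (∀ x₂ l₂, ∑ a₂, p₂ a₂ x₂ l₂ = 1) ∧
      (∀ a₁ a₂ x₁ x₂, p a₁ a₂ x₁ x₂ =
        ∑ l₁, ∑ l₂, p₁ a₁ x₁ l₁ * p₂ a₂ x₂ l₂ * q l₁ l₂) := by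
  have hA₁p : 0 < A₁ := hA₁
  have hA₂p : 0 < A₂ := hA₂
  have hA₁0 : (A₁:ℝ) ≠ 0 := Nat.cast_ne_zero.mpr (by omega)
  have hA₂0 : (A₂:ℝ) ≠ 0 := Nat.cast_ne_zero.mpr (by omega)
  have hX₁0 : (X₁:ℝ) ≠ 0 := Nat.cast_ne_zero.mpr (by omega)
  have hX₂0 : (X₂:ℝ) ≠ 0 := Nat.cast_ne_zero.mpr (by omega)
  constructor
  · rintro ⟨hns₁, hns₂⟩
    set x₁0 : Fin X₁ := ⟨0, hX₁⟩ with hx₁0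
    set x₂0 : Fin X₂ := ⟨0, hX₂⟩ with hx₂0
    have hP₁ : ∀ b y y₂, (∑ b₂, p b b₂ y y₂) = ∑ b₂, p b b₂ y x₂0 :=
      fun b y y₂ => hns₁ b y y₂ x₂0
    have hP₂ : ∀ b y y₁, (∑ b₁, p b₁ b y₁ y) = ∑ b₁, p b₁ b x₁0 y :=
      fun b y y₁ => hns₂ b y y₁ x₁0
    have hP₁sum : ∀ y, ∑ b, ∑ b₂, p b b₂ y x₂0 = 1 := fun y => hnorm y x₂0
    have hP₂sum : ∀ y, ∑ b : Fin A₂, ∑ b₁, p b₁ b x₁0 y = 1 := fun y => by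
      rw [Finset.sum_comm]; exact hnorm x₁0 y
    have hQcol₂ : ∀ (m₁ : Fin A₁ × Fin X₁) (y₂ : Fin X₂),
        ∑ b₂, qdef p x₁0 x₂0 m₁ (b₂, y₂)
          = ((∑ b₂, p m₁.1 b₂ m₁.2 x₂0) - ((X₁:ℝ) - 1) / ((A₁:ℝ) * (X₁:ℝ))) / X₂ := by
      intro m₁ y₂
      simp only [qdef]
      rw [Finset.sum_add_distrib, Finset.sum_sub_distrib, Finset.sum_sub_distrib]
      simp only [Finset.sum_const, Finset.card_univ, Fintype.card_fin, nsmul_eq_mul]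
      rw [← Finset.mul_sum, hP₁ m₁.1 m₁.2 y₂, hP₂sum y₂, mul_one]
      field_simp
      ring
    have hQcol₁ : ∀ (m₂ : Fin A₂ × Fin X₂) (y₁ : Fin X₁),
        ∑ b₁, qdef p x₁0 x₂0 (b₁, y₁) m₂
          = ((∑ b₁, p b₁ m₂.1 x₁0 m₂.2) - ((X₂:ℝ) - 1) / ((A₂:ℝ) * (X₂:ℝ))) / X₁ := by
      intro m₂ y₁
      simp only [qdef]
      rw [Finset.sum_add_distrib, Finset.sum_sub_distrib, Finset.sum_sub_distrib]
      simp only [Finset.sum_const, Finset.card_univ, Fintype.card_fin, nsmul_eq_mul]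
      rw [← Finset.mul_sum, hP₁sum y₁, mul_one, hP₂ m₂.1 m₂.2 y₁]
      field_simp
      ring
    have hQtot : ∑ m₁ : Fin A₁ × Fin X₁, ∑ m₂ : Fin A₂ × Fin X₂,
        qdef p x₁0 x₂0 m₁ m₂ = 1 := by
      have hinner : ∀ m₁ : Fin A₁ × Fin X₁, ∑ m₂ : Fin A₂ × Fin X₂, qdef p x₁0 x₂0 m₁ m₂
          = (∑ b₂, p m₁.1 b₂ m₁.2 x₂0) - ((X₁:ℝ) - 1) / ((A₁:ℝ) * (X₁:ℝ)) := by
        intro m₁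
        rw [Fintype.sum_prod_type, Finset.sum_comm]
        rw [Finset.sum_congr rfl fun y₂ _ => hQcol₂ m₁ y₂]
        rw [Finset.sum_const, Finset.card_univ, Fintype.card_fin, nsmul_eq_mul]
        field_simp
      rw [Finset.sum_congr rfl fun m₁ _ => hinner m₁]
      rw [Fintype.sum_prod_type, Finset.sum_comm]
      have hcol : ∀ y₁ : Fin X₁, ∑ b₁ : Fin A₁,
          ((∑ b₂, p b₁ b₂ y₁ x₂0) - ((X₁:ℝ) - 1) / ((A₁:ℝ) * (X₁:ℝ)))
          = 1 - (A₁:ℝ) * (((X₁:ℝ) - 1) / ((A₁:ℝ) * (X₁:ℝ))) := by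
        intro y₁
        rw [Finset.sum_sub_distrib, hP₁sum y₁, Finset.sum_const, Finset.card_univ,
          Fintype.card_fin, nsmul_eq_mul]
      rw [Finset.sum_congr rfl fun y₁ _ => hcol y₁]
      rw [Finset.sum_const, Finset.card_univ, Fintype.card_fin, nsmul_eq_mul]
      field_simp
      ring
    refine ⟨A₁ * X₁, A₂ * X₂,
      fun l₁ l₂ => qdef p x₁0 x₂0 (finProdFinEquiv.symm l₁) (finProdFinEquiv.symm l₂),
      fun a x l => dU a x (finProdFinEquiv.symm l),
      fun a x l => dU a x (finProdFinEquiv.symm l),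
      ?_, ?_, ?_, ?_, ?_, ?_⟩
    · calc (∑ l₁ : Fin (A₁ * X₁), ∑ l₂ : Fin (A₂ * X₂),
            qdef p x₁0 x₂0 (finProdFinEquiv.symm l₁) (finProdFinEquiv.symm l₂))
          = ∑ m₁ : Fin A₁ × Fin X₁, ∑ l₂ : Fin (A₂ * X₂),
            qdef p x₁0 x₂0 m₁ (finProdFinEquiv.symm l₂) :=
            Fintype.sum_equiv finProdFinEquiv.symm _ _ (fun _ => rfl)
        _ = ∑ m₁ : Fin A₁ × Fin X₁, ∑ m₂ : Fin A₂ × Fin X₂, qdef p x₁0 x₂0 m₁ m₂ :=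
            Finset.sum_congr rfl fun m₁ _ =>
              Fintype.sum_equiv finProdFinEquiv.symm _ _ (fun _ => rfl)
        _ = 1 := hQtot
    · intro a x l; exact dU_nonneg a x _
    · intro a x l; exact dU_nonneg a x _
    · intro x l; exact dU_sum hA₁p x _
    · intro x l; exact dU_sum hA₂p x _
    · intro a₁ a₂ x₁ x₂
      have hconv : (∑ l₁ : Fin (A₁ * X₁), ∑ l₂ : Fin (A₂ * X₂),
            dU a₁ x₁ (finProdFinEquiv.symm l₁) * dU a₂ x₂ (finProdFinEquiv.symm l₂) *
              qdef p x₁0 x₂0 (finProdFinEquiv.symm l₁) (finProdFinEquiv.symm l₂))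
          = ∑ m₁ : Fin A₁ × Fin X₁, ∑ m₂ : Fin A₂ × Fin X₂,
              dU a₁ x₁ m₁ * dU a₂ x₂ m₂ * qdef p x₁0 x₂0 m₁ m₂ := by
        calc _ = ∑ m₁ : Fin A₁ × Fin X₁, ∑ l₂ : Fin (A₂ * X₂),
              dU a₁ x₁ m₁ * dU a₂ x₂ (finProdFinEquiv.symm l₂) *
                qdef p x₁0 x₂0 m₁ (finProdFinEquiv.symm l₂) :=
              Fintype.sum_equiv finProdFinEquiv.symm _ _ (fun _ => rfl)
          _ = _ := Finset.sum_congr rfl fun m₁ _ =>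
              Fintype.sum_equiv finProdFinEquiv.symm _ _ (fun _ => rfl)
      rw [hconv]
      have hfac : ∀ m₁ : Fin A₁ × Fin X₁,
          (∑ m₂ : Fin A₂ × Fin X₂, dU a₁ x₁ m₁ * dU a₂ x₂ m₂ * qdef p x₁0 x₂0 m₁ m₂)
          = dU a₁ x₁ m₁ * ∑ m₂ : Fin A₂ × Fin X₂, dU a₂ x₂ m₂ * qdef p x₁0 x₂0 m₁ m₂ := by
        intro m₁
        rw [Finset.mul_sum]
        exact Finset.sum_congr rfl fun m₂ _ => by ring
      rw [Finset.sum_congr rfl fun m₁ _ => hfac m₁]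
      have hinner : ∀ m₁ : Fin A₁ × Fin X₁,
          (∑ m₂ : Fin A₂ × Fin X₂, dU a₂ x₂ m₂ * qdef p x₁0 x₂0 m₁ m₂)
          = qdef p x₁0 x₂0 m₁ (a₂, x₂) + ((X₂:ℝ) - 1) / A₂ *
              (((∑ b₂, p m₁.1 b₂ m₁.2 x₂0) - ((X₁:ℝ) - 1) / ((A₁:ℝ) * (X₁:ℝ))) / X₂) :=
        fun m₁ => aux1 hA₂p a₂ x₂ (fun m₂ => qdef p x₁0 x₂0 m₁ m₂) _ (hQcol₂ m₁)
      rw [Finset.sum_congr rfl fun m₁ _ => by rw [hinner m₁]]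
      have hRcol : ∀ y₁ : Fin X₁, ∑ b₁ : Fin A₁,
          (qdef p x₁0 x₂0 (b₁, y₁) (a₂, x₂) + ((X₂:ℝ) - 1) / A₂ *
            (((∑ b₂, p b₁ b₂ y₁ x₂0) - ((X₁:ℝ) - 1) / ((A₁:ℝ) * (X₁:ℝ))) / X₂))
          = (∑ b₁, p b₁ a₂ x₁0 x₂) / X₁ := by
        intro y₁
        rw [Finset.sum_add_distrib, hQcol₁ (a₂, x₂) y₁]
        have h2 : ∑ b₁ : Fin A₁, ((X₂:ℝ) - 1) / A₂ *
            (((∑ b₂, p b₁ b₂ y₁ x₂0) - ((X₁:ℝ) - 1) / ((A₁:ℝ) * (X₁:ℝ))) / X₂)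
            = ((X₂:ℝ) - 1) / A₂ *
              ((1 - (A₁:ℝ) * (((X₁:ℝ) - 1) / ((A₁:ℝ) * (X₁:ℝ)))) / X₂) := by
          rw [← Finset.mul_sum]
          congr 1
          rw [← Finset.sum_div]
          congr 1
          rw [Finset.sum_sub_distrib, hP₁sum y₁, Finset.sum_const, Finset.card_univ,
            Fintype.card_fin, nsmul_eq_mul]
        rw [h2]
        field_simp
        ring
      have houter := aux1 hA₁p a₁ x₁
        (fun m₁ => qdef p x₁0 x₂0 m₁ (a₂, x₂) + ((X₂:ℝ) - 1) / A₂ *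
          (((∑ b₂, p m₁.1 b₂ m₁.2 x₂0) - ((X₁:ℝ) - 1) / ((A₁:ℝ) * (X₁:ℝ))) / X₂))
        ((∑ b₁, p b₁ a₂ x₁0 x₂) / X₁) hRcol
      rw [houter]
      simp only [qdef]
      field_simp
      ring
  · rintro ⟨n₁, n₂, q, p₁, p₂, hq1, h10, h20, h1n, h2n, hrep⟩
    constructor
    · intro a₁ x₁ x₂ x₂'
      have key : ∀ x₂ : Fin X₂, ∑ a₂, p a₁ a₂ x₁ x₂
          = ∑ l₁, ∑ l₂, p₁ a₁ x₁ l₁ * q l₁ l₂ := by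
        intro x₂
        simp_rw [hrep]
        rw [Finset.sum_comm]
        refine Finset.sum_congr rfl fun l₁ _ => ?_
        rw [Finset.sum_comm]
        refine Finset.sum_congr rfl fun l₂ _ => ?_
        rw [Finset.sum_congr rfl fun a₂ _ =>
          show p₁ a₁ x₁ l₁ * p₂ a₂ x₂ l₂ * q l₁ l₂
              = (p₁ a₁ x₁ l₁ * q l₁ l₂) * p₂ a₂ x₂ l₂ by ring]
        rw [← Finset.mul_sum, h2n x₂ l₂, mul_one]
      rw [key x₂, key x₂']
    · intro a₂ x₂ x₁ x₁'
      have key : ∀ x₁ : Fin X₁, ∑ a₁, p a₁ a₂ x₁ x₂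
          = ∑ l₁, ∑ l₂, p₂ a₂ x₂ l₂ * q l₁ l₂ := by
        intro x₁
        simp_rw [hrep]
        rw [Finset.sum_comm]
        refine Finset.sum_congr rfl fun l₁ _ => ?_
        rw [Finset.sum_comm]
        refine Finset.sum_congr rfl fun l₂ _ => ?_
        rw [Finset.sum_congr rfl fun a₁ _ =>
          show p₁ a₁ x₁ l₁ * p₂ a₂ x₂ l₂ * q l₁ l₂
              = (p₂ a₂ x₂ l₂ * q l₁ l₂) * p₁ a₁ x₁ l₁ by ring]
        rw [← Finset.mul_sum, h1n x₁ l₁, mul_one]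
      rw [key x₁, key x₁']
end

section
/- Let p(a₁,a₂|x₁,x₂) be a bipartite conditional probability distribution. Then p is non-signalling if and only if there exist finite-dimensional Hilbert spaces H₁, H₂, POVM elements M⁽ᵏ⁾_{a|x} on Hₖ (positive semidefinite with ∑_a M⁽ᵏ⁾_{a|x} = I for each x), and a Hermitian operator ρ̃ on H₁ ⊗ H₂ with Tr(ρ̃) = 1 (not necessarily positive), all diagonal in a fixed product orthonormal basis, such that p(a₁,a₂|x₁,x₂) = Tr((M⁽¹⁾_{a₁|x₁} ⊗ M⁽²⁾_{a₂|x₂}) ρ̃). -/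
open Matrix Kronecker ComplexOrder

/-- Local (diagonal) response function: deterministic on input `x`, uniform elsewhere. -/
noncomputable def eFn (A X : ℕ) (a : Fin A) (x : Fin X) (s : Fin A × Fin X) : ℝ :=
  if s.2 = x then (if s.1 = a then 1 else 0) else 1 / A

lemma eFn_nonneg (A X : ℕ) (a : Fin A) (x : Fin X) (s : Fin A × Fin X) :
    0 ≤ eFn A X a x s := by
  unfold eFn; split_ifs <;> positivity

lemma eFn_sum {A X : ℕ} (hA : 1 ≤ A) (x : Fin X) (s : Fin A × Fin X) :
    ∑ a, eFn A X a x s = 1 := by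
  have hA' : (A:ℝ) ≠ 0 := Nat.cast_ne_zero.mpr (by omega)
  unfold eFn
  by_cases h : s.2 = x
  · simp [h]
  · simp only [h, if_false, Finset.sum_const, Finset.card_univ, Fintype.card_fin,
      nsmul_eq_mul]
    field_simp

lemma sum_ite_point {n : ℕ} (y : Fin n) (F G : Fin n → ℝ) :
    ∑ y', (if y' = y then F y' else G y') = (∑ y', G y') + (F y - G y) := by
  have h : ∀ y', (if y' = y then F y' else G y')
      = G y' + (if y' = y then F y' - G y' else 0) := fun y' => by split_ifs <;> ring
  simp_rw [h, Finset.sum_add_distrib, Fintype.sum_ite_eq']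
lemma keyQb {A₁ A₂ X₁ X₂ : ℕ}
    (p : Fin A₁ → Fin A₂ → Fin X₁ → Fin X₂ → ℝ)
    (P1 : Fin A₁ → Fin X₁ → ℝ) (P2 : Fin A₂ → Fin X₂ → ℝ)
    (hS2 : ∀ a x y, ∑ b, p a b x y = P1 a x)
    (hS4 : ∀ y, ∑ b, P2 b y = 1)
    (β γ δ : ℝ) (a' : Fin A₁) (x' : Fin X₁) (y' : Fin X₂) :
    ∑ b', (p a' b' x' y' + β * P1 a' x' + γ * P2 b' y' + δ)
      = (1 + A₂*β) * P1 a' x' + (γ + A₂*δ) := by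
  simp only [Finset.sum_add_distrib, ← Finset.mul_sum, Finset.sum_const,
    Finset.card_univ, Fintype.card_fin, nsmul_eq_mul]
  rw [hS2, hS4]
  ring

lemma keyQa {A₁ A₂ X₁ X₂ : ℕ}
    (p : Fin A₁ → Fin A₂ → Fin X₁ → Fin X₂ → ℝ)
    (P1 : Fin A₁ → Fin X₁ → ℝ) (P2 : Fin A₂ → Fin X₂ → ℝ)
    (hS1 : ∀ b x y, ∑ a, p a b x y = P2 b y)
    (hS3 : ∀ x, ∑ a, P1 a x = 1)
    (β γ δ : ℝ) (b : Fin A₂) (x' : Fin X₁) (y : Fin X₂) :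
    ∑ a', (p a' b x' y + β * P1 a' x' + γ * P2 b y + δ)
      = (1 + A₁*γ) * P2 b y + (β + A₁*δ) := by
  simp only [Finset.sum_add_distrib, ← Finset.mul_sum, Finset.sum_const,
    Finset.card_univ, Fintype.card_fin, nsmul_eq_mul]
  rw [hS1, hS3]
  ring

lemma keyG {A₁ A₂ X₁ X₂ : ℕ}
    (p : Fin A₁ → Fin A₂ → Fin X₁ → Fin X₂ → ℝ)
    (P1 : Fin A₁ → Fin X₁ → ℝ) (P2 : Fin A₂ → Fin X₂ → ℝ)
    (hS2 : ∀ a x y, ∑ b, p a b x y = P1 a x)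
    (hS4 : ∀ y, ∑ b, P2 b y = 1)
    (β γ δ : ℝ) (b : Fin A₂) (y : Fin X₂) (a' : Fin A₁) (x' : Fin X₁) :
    ∑ t : Fin A₂ × Fin X₂, eFn A₂ X₂ b y t *
        (p a' t.1 x' t.2 + β * P1 a' x' + γ * P2 t.1 t.2 + δ)
      = (p a' b x' y + β * P1 a' x' + γ * P2 b y + δ)
        + ((X₂:ℝ)-1)/A₂ * ((1 + A₂*β) * P1 a' x' + (γ + A₂*δ)) := by
  rw [Fintype.sum_prod_type_right]
  have hrow : ∀ y' : Fin X₂,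
      ∑ b', eFn A₂ X₂ b y (b', y') * (p a' b' x' y' + β * P1 a' x' + γ * P2 b' y' + δ)
        = if y' = y then (p a' b x' y + β * P1 a' x' + γ * P2 b y + δ)
          else (1/A₂) * ((1 + A₂*β) * P1 a' x' + (γ + A₂*δ)) := by
    intro y'
    by_cases h : y' = y
    · subst h
      simp only [eFn, eq_self_iff_true, if_true, ite_true, ite_mul, one_mul, zero_mul]
      rw [Fintype.sum_ite_eq']
    · simp only [eFn, h, if_false, ite_false]
      rw [← Finset.mul_sum, keyQb p P1 P2 hS2 hS4 β γ δ a' x' y']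
  simp_rw [hrow]
  rw [sum_ite_point y]
  simp only [Finset.sum_const, Finset.card_univ, Fintype.card_fin, nsmul_eq_mul]
  ring
lemma keyMain {A₁ A₂ X₁ X₂ : ℕ}
    (hA₁ : 1 ≤ A₁) (hA₂ : 1 ≤ A₂) (hX₁ : 1 ≤ X₁) (hX₂ : 1 ≤ X₂)
    (p : Fin A₁ → Fin A₂ → Fin X₁ → Fin X₂ → ℝ)
    (P1 : Fin A₁ → Fin X₁ → ℝ) (P2 : Fin A₂ → Fin X₂ → ℝ)
    (hS2 : ∀ a x y, ∑ b, p a b x y = P1 a x)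
    (hS1 : ∀ b x y, ∑ a, p a b x y = P2 b y)
    (hS3 : ∀ x, ∑ a, P1 a x = 1)
    (hS4 : ∀ y, ∑ b, P2 b y = 1)
    (a : Fin A₁) (b : Fin A₂) (x : Fin X₁) (y : Fin X₂) :
    ∑ s : Fin A₁ × Fin X₁, ∑ t : Fin A₂ × Fin X₂,
      eFn A₁ X₁ a x s * eFn A₂ X₂ b y t *
        (p s.1 t.1 s.2 t.2 + (-((X₂:ℝ)-1)/(A₂*X₂)) * P1 s.1 s.2
          + (-((X₁:ℝ)-1)/(A₁*X₁)) * P2 t.1 t.2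
          + ((X₁:ℝ)-1)*((X₂:ℝ)-1)/(A₁*A₂*X₁*X₂)) = p a b x y := by
  have hA₁' : (A₁:ℝ) ≠ 0 := Nat.cast_ne_zero.mpr (by omega)
  have hA₂' : (A₂:ℝ) ≠ 0 := Nat.cast_ne_zero.mpr (by omega)
  have hX₁' : (X₁:ℝ) ≠ 0 := Nat.cast_ne_zero.mpr (by omega)
  have hX₂' : (X₂:ℝ) ≠ 0 := Nat.cast_ne_zero.mpr (by omega)
  set β : ℝ := -((X₂:ℝ)-1)/(A₂*X₂) with hβ
  set γ : ℝ := -((X₁:ℝ)-1)/(A₁*X₁) with hγ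
  set δ : ℝ := ((X₁:ℝ)-1)*((X₂:ℝ)-1)/(A₁*A₂*X₁*X₂) with hδ
  simp_rw [mul_assoc, ← Finset.mul_sum]
  simp_rw [keyG p P1 P2 hS2 hS4 β γ δ b y]
  rw [Fintype.sum_prod_type_right]
  have hrow2 : ∀ x' : Fin X₁,
      ∑ a', eFn A₁ X₁ a x (a', x') * ((p a' b x' y + β * P1 a' x' + γ * P2 b y + δ)
            + ((X₂:ℝ)-1)/A₂ * ((1 + A₂*β) * P1 a' x' + (γ + A₂*δ)))
        = if x' = x then (p a b x y + β * P1 a x + γ * P2 b y + δ)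
              + ((X₂:ℝ)-1)/A₂ * ((1 + A₂*β) * P1 a x + (γ + A₂*δ))
          else (1/A₁) * (((1 + A₁*γ) * P2 b y + (β + A₁*δ))
              + ((X₂:ℝ)-1)/A₂ * ((1 + A₂*β) + A₁*(γ + A₂*δ))) := by
    intro x'
    by_cases h : x' = x
    · subst h
      simp only [eFn, eq_self_iff_true, if_true, ite_true, ite_mul, one_mul, zero_mul]
      rw [Fintype.sum_ite_eq']
    · simp only [eFn, h, if_false, ite_false]
      rw [← Finset.mul_sum, Finset.sum_add_distrib,
        keyQa p P1 P2 hS1 hS3 β γ δ b x' y]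
      rw [← Finset.mul_sum, Finset.sum_add_distrib, ← Finset.mul_sum, hS3]
      simp only [Finset.sum_const, Finset.card_univ, Fintype.card_fin, nsmul_eq_mul]
      ring
  simp_rw [hrow2]
  rw [sum_ite_point x]
  simp only [Finset.sum_const, Finset.card_univ, Fintype.card_fin, nsmul_eq_mul]
  rw [hβ, hγ, hδ]
  field_simp
  ring

lemma keyTrace {A₁ A₂ X₁ X₂ : ℕ}
    (hA₁ : 1 ≤ A₁) (hA₂ : 1 ≤ A₂) (hX₁ : 1 ≤ X₁) (hX₂ : 1 ≤ X₂)
    (p : Fin A₁ → Fin A₂ → Fin X₁ → Fin X₂ → ℝ)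
    (P1 : Fin A₁ → Fin X₁ → ℝ) (P2 : Fin A₂ → Fin X₂ → ℝ)
    (hS2 : ∀ a x y, ∑ b, p a b x y = P1 a x)
    (hS3 : ∀ x, ∑ a, P1 a x = 1)
    (hS4 : ∀ y, ∑ b, P2 b y = 1) :
    ∑ s : Fin A₁ × Fin X₁, ∑ t : Fin A₂ × Fin X₂,
      (p s.1 t.1 s.2 t.2 + (-((X₂:ℝ)-1)/(A₂*X₂)) * P1 s.1 s.2
        + (-((X₁:ℝ)-1)/(A₁*X₁)) * P2 t.1 t.2
        + ((X₁:ℝ)-1)*((X₂:ℝ)-1)/(A₁*A₂*X₁*X₂)) = 1 := by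
  have hA₁' : (A₁:ℝ) ≠ 0 := Nat.cast_ne_zero.mpr (by omega)
  have hA₂' : (A₂:ℝ) ≠ 0 := Nat.cast_ne_zero.mpr (by omega)
  have hX₁' : (X₁:ℝ) ≠ 0 := Nat.cast_ne_zero.mpr (by omega)
  have hX₂' : (X₂:ℝ) ≠ 0 := Nat.cast_ne_zero.mpr (by omega)
  set β : ℝ := -((X₂:ℝ)-1)/(A₂*X₂) with hβ
  set γ : ℝ := -((X₁:ℝ)-1)/(A₁*X₁) with hγ
  set δ : ℝ := ((X₁:ℝ)-1)*((X₂:ℝ)-1)/(A₁*A₂*X₁*X₂) with hδ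
  have hinner : ∀ (s : Fin A₁ × Fin X₁),
      ∑ t : Fin A₂ × Fin X₂,
        (p s.1 t.1 s.2 t.2 + β * P1 s.1 s.2 + γ * P2 t.1 t.2 + δ)
      = (X₂:ℝ) * ((1 + A₂*β) * P1 s.1 s.2 + (γ + A₂*δ)) := by
    intro s
    rw [Fintype.sum_prod_type_right]
    simp_rw [keyQb p P1 P2 hS2 hS4 β γ δ s.1 s.2]
    simp only [Finset.sum_const, Finset.card_univ, Fintype.card_fin, nsmul_eq_mul]
  simp_rw [hinner]
  rw [Fintype.sum_prod_type_right]
  have hcol : ∀ x' : Fin X₁,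
      ∑ a', (X₂:ℝ) * ((1 + A₂*β) * P1 a' x' + (γ + A₂*δ))
        = (X₂:ℝ) * ((1 + A₂*β) + A₁ * (γ + A₂*δ)) := by
    intro x'
    rw [← Finset.mul_sum, Finset.sum_add_distrib, ← Finset.mul_sum, hS3]
    simp only [Finset.sum_const, Finset.card_univ, Fintype.card_fin, nsmul_eq_mul]
    ring
  simp_rw [hcol]
  simp only [Finset.sum_const, Finset.card_univ, Fintype.card_fin, nsmul_eq_mul]
  rw [hβ, hγ, hδ]
  field_simp
  ring
lemma kron_sum_right {m n ι : Type*} [Fintype ι] (M : Matrix m m ℂ) (f : ι → Matrix n n ℂ) :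
    M ⊗ₖ (∑ i, f i) = ∑ i, M ⊗ₖ f i := by
  ext ⟨i, j⟩ ⟨k, l⟩
  simp [Matrix.kroneckerMap_apply, Matrix.sum_apply, Finset.mul_sum]

lemma kron_sum_left {m n ι : Type*} [Fintype ι] (f : ι → Matrix m m ℂ) (N : Matrix n n ℂ) :
    (∑ i, f i) ⊗ₖ N = ∑ i, f i ⊗ₖ N := by
  ext ⟨i, j⟩ ⟨k, l⟩
  simp [Matrix.kroneckerMap_apply, Matrix.sum_apply, Finset.sum_mul]

lemma diagSum {n ι : Type*} [Fintype ι] [DecidableEq n] (f : ι → n → ℂ) :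
    ∑ i, Matrix.diagonal (f i) = Matrix.diagonal (fun j => ∑ i, f i j) := by
  ext j k
  by_cases h : j = k
  · subst h; simp [Matrix.sum_apply]
  · simp [Matrix.sum_apply, Matrix.diagonal_apply_ne _ h]

lemma commute_diag {n : Type*} [Fintype n] [DecidableEq n] (f g : n → ℂ) :
    Commute (Matrix.diagonal f) (Matrix.diagonal g) := by
  unfold Commute SemiconjBy
  rw [Matrix.diagonal_mul_diagonal, Matrix.diagonal_mul_diagonal]
  exact congrArg Matrix.diagonal (funext fun i => mul_comm (f i) (g i))

lemma isHermitian_diagonal_ofReal {n : Type*} [DecidableEq n] (f : n → ℝ) :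
    (Matrix.diagonal (fun i => ((f i : ℝ) : ℂ))).IsHermitian := by
  rw [Matrix.IsHermitian, Matrix.diagonal_conjTranspose]
  exact congrArg Matrix.diagonal (funext fun i => Complex.conj_ofReal (f i))

lemma reidx_sum {A₁ A₂ X₁ X₂ : ℕ} (F : (Fin A₁ × Fin X₁) → (Fin A₂ × Fin X₂) → ℂ) :
    ∑ jk : Fin (A₁*X₁) × Fin (A₂*X₂),
        F (finProdFinEquiv.symm jk.1) (finProdFinEquiv.symm jk.2)
      = ∑ s, ∑ t, F s t := by
  rw [← Fintype.sum_prod_type']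
  exact Fintype.sum_equiv (Equiv.prodCongr finProdFinEquiv.symm finProdFinEquiv.symm)
    _ _ (fun jk => rfl)

/-- Corollary 2 (bipartite): p is non-signalling iff it arises from the Born rule with
genuine POVM elements and a Hermitian (possibly non-positive) unit-trace operator,
with all operators commuting. -/
theorem stmt8 {A₁ A₂ X₁ X₂ : ℕ}
    (hA₁ : 1 ≤ A₁) (hA₂ : 1 ≤ A₂) (hX₁ : 1 ≤ X₁) (hX₂ : 1 ≤ X₂)
    (p : Fin A₁ → Fin A₂ → Fin X₁ → Fin X₂ → ℝ)
    (hp0 : ∀ a₁ a₂ x₁ x₂, 0 ≤ p a₁ a₂ x₁ x₂)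
    (hnorm : ∀ x₁ x₂, ∑ a₁, ∑ a₂, p a₁ a₂ x₁ x₂ = 1) :
    ((∀ a₁ x₁ x₂ x₂', ∑ a₂, p a₁ a₂ x₁ x₂ = ∑ a₂, p a₁ a₂ x₁ x₂') ∧
     (∀ a₂ x₂ x₁ x₁', ∑ a₁, p a₁ a₂ x₁ x₂ = ∑ a₁, p a₁ a₂ x₁' x₂)) ↔
    ∃ (d₁ d₂ : ℕ)
      (M₁ : Fin A₁ → Fin X₁ → Matrix (Fin d₁) (Fin d₁) ℂ)
      (M₂ : Fin A₂ → Fin X₂ → Matrix (Fin d₂) (Fin d₂) ℂ)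
      (ρ : Matrix (Fin d₁ × Fin d₂) (Fin d₁ × Fin d₂) ℂ),
      (∀ a₁ x₁, (M₁ a₁ x₁).PosSemidef) ∧
      (∀ a₂ x₂, (M₂ a₂ x₂).PosSemidef) ∧
      (∀ x₁, ∑ a₁, M₁ a₁ x₁ = 1) ∧
      (∀ x₂, ∑ a₂, M₂ a₂ x₂ = 1) ∧
      ρ.IsHermitian ∧ ρ.trace = 1 ∧
      (∀ a₁ a₂ x₁ x₂ a₁' a₂' x₁' x₂',
        Commute (M₁ a₁ x₁ ⊗ₖ M₂ a₂ x₂) (M₁ a₁' x₁' ⊗ₖ M₂ a₂' x₂')) ∧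
      (∀ a₁ a₂ x₁ x₂, Commute (M₁ a₁ x₁ ⊗ₖ M₂ a₂ x₂) ρ) ∧
      (∀ a₁ a₂ x₁ x₂,
        (p a₁ a₂ x₁ x₂ : ℂ) = ((M₁ a₁ x₁ ⊗ₖ M₂ a₂ x₂) * ρ).trace) := by
  constructor
  · rintro ⟨hNS1, hNS2⟩
    set x0 : Fin X₁ := ⟨0, hX₁⟩
    set y0 : Fin X₂ := ⟨0, hX₂⟩
    set P1 : Fin A₁ → Fin X₁ → ℝ := fun a x => ∑ b, p a b x y0 with hP1
    set P2 : Fin A₂ → Fin X₂ → ℝ := fun b y => ∑ a, p a b x0 y with hP2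
    have hS2 : ∀ a x y, ∑ b, p a b x y = P1 a x := fun a x y => hNS1 a x y y0
    have hS1 : ∀ b x y, ∑ a, p a b x y = P2 b y := fun b x y => hNS2 b y x x0
    have hS3 : ∀ x, ∑ a, P1 a x = 1 := fun x => by
      simp only [hP1]; exact hnorm x y0
    have hS4 : ∀ y, ∑ b, P2 b y = 1 := fun y => by
      simp only [hP2]; rw [Finset.sum_comm]; exact hnorm x0 y
    set q : (Fin A₁ × Fin X₁) → (Fin A₂ × Fin X₂) → ℝ := fun s t =>
      p s.1 t.1 s.2 t.2 + (-((X₂:ℝ)-1)/(A₂*X₂)) * P1 s.1 s.2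
        + (-((X₁:ℝ)-1)/(A₁*X₁)) * P2 t.1 t.2
        + ((X₁:ℝ)-1)*((X₂:ℝ)-1)/(A₁*A₂*X₁*X₂) with hq
    refine ⟨A₁ * X₁, A₂ * X₂,
      fun a x => Matrix.diagonal (fun j => ((eFn A₁ X₁ a x (finProdFinEquiv.symm j) : ℝ) : ℂ)),
      fun b y => Matrix.diagonal (fun k => ((eFn A₂ X₂ b y (finProdFinEquiv.symm k) : ℝ) : ℂ)),
      Matrix.diagonal (fun jk => ((q (finProdFinEquiv.symm jk.1) (finProdFinEquiv.symm jk.2) : ℝ) : ℂ)),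
      ?_, ?_, ?_, ?_, ?_, ?_, ?_, ?_, ?_⟩
    · intro a x
      refine Matrix.posSemidef_diagonal_iff.mpr fun j => ?_
      exact_mod_cast eFn_nonneg A₁ X₁ a x _
    · intro b y
      refine Matrix.posSemidef_diagonal_iff.mpr fun k => ?_
      exact_mod_cast eFn_nonneg A₂ X₂ b y _
    · intro x
      beta_reduce
      rw [diagSum]
      have : (fun j : Fin (A₁*X₁) =>
          ∑ a, ((eFn A₁ X₁ a x (finProdFinEquiv.symm j) : ℝ) : ℂ)) = fun _ => 1 := by
        funext j
        rw [← Complex.ofReal_sum, eFn_sum hA₁]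
        simp
      rw [this, Matrix.diagonal_one]
    · intro y
      beta_reduce
      rw [diagSum]
      have : (fun k : Fin (A₂*X₂) =>
          ∑ b, ((eFn A₂ X₂ b y (finProdFinEquiv.symm k) : ℝ) : ℂ)) = fun _ => 1 := by
        funext k
        rw [← Complex.ofReal_sum, eFn_sum hA₂]
        simp
      rw [this, Matrix.diagonal_one]
    · exact isHermitian_diagonal_ofReal _
    · rw [Matrix.trace_diagonal,
        reidx_sum (fun s t => ((q s t : ℝ) : ℂ))]
      have h1 : ∑ s : Fin A₁ × Fin X₁, ∑ t : Fin A₂ × Fin X₂, q s t = 1 :=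
        keyTrace hA₁ hA₂ hX₁ hX₂ p P1 P2 hS2 hS3 hS4
      calc ∑ s : Fin A₁ × Fin X₁, ∑ t : Fin A₂ × Fin X₂, ((q s t : ℝ) : ℂ)
          = ((∑ s : Fin A₁ × Fin X₁, ∑ t : Fin A₂ × Fin X₂, q s t : ℝ) : ℂ) := by
            push_cast; rfl
        _ = 1 := by rw [h1]; simp
    · intro a₁ a₂ x₁ x₂ a₁' a₂' x₁' x₂'
      beta_reduce
      rw [Matrix.diagonal_kronecker_diagonal, Matrix.diagonal_kronecker_diagonal]
      exact commute_diag _ _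
    · intro a₁ a₂ x₁ x₂
      beta_reduce
      rw [Matrix.diagonal_kronecker_diagonal]
      exact commute_diag _ _
    · intro a₁ a₂ x₁ x₂
      beta_reduce
      rw [Matrix.diagonal_kronecker_diagonal, Matrix.diagonal_mul_diagonal,
        Matrix.trace_diagonal,
        reidx_sum (fun s t => ((eFn A₁ X₁ a₁ x₁ s : ℝ) : ℂ)
          * ((eFn A₂ X₂ a₂ x₂ t : ℝ) : ℂ) * ((q s t : ℝ) : ℂ))]
      have h1 : ∑ s : Fin A₁ × Fin X₁, ∑ t : Fin A₂ × Fin X₂,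
          eFn A₁ X₁ a₁ x₁ s * eFn A₂ X₂ a₂ x₂ t * q s t = p a₁ a₂ x₁ x₂ :=
        keyMain hA₁ hA₂ hX₁ hX₂ p P1 P2 hS2 hS1 hS3 hS4 a₁ a₂ x₁ x₂
      calc (p a₁ a₂ x₁ x₂ : ℂ)
          = ((∑ s : Fin A₁ × Fin X₁, ∑ t : Fin A₂ × Fin X₂,
              eFn A₁ X₁ a₁ x₁ s * eFn A₂ X₂ a₂ x₂ t * q s t : ℝ) : ℂ) := by rw [h1]
        _ = _ := by push_cast; rfl
  · rintro ⟨d₁, d₂, M₁, M₂, ρ, hM₁, hM₂, hM₁sum, hM₂sum, hherm, htr, hc1, hc2, hBorn⟩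
    constructor
    · intro a₁ x₁ x₂ x₂'
      have key : ∀ x₂ : Fin X₂, ((∑ a₂, p a₁ a₂ x₁ x₂ : ℝ) : ℂ)
          = ((M₁ a₁ x₁ ⊗ₖ (1 : Matrix (Fin d₂) (Fin d₂) ℂ)) * ρ).trace := by
        intro x₂
        push_cast
        simp_rw [hBorn]
        rw [← Matrix.trace_sum, ← Finset.sum_mul, ← kron_sum_right, hM₂sum x₂]
      have := (key x₂).trans (key x₂').symm
      exact_mod_cast this
    · intro a₂ x₂ x₁ x₁'
      have key : ∀ x₁ : Fin X₁, ((∑ a₁, p a₁ a₂ x₁ x₂ : ℝ) : ℂ)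
          = (((1 : Matrix (Fin d₁) (Fin d₁) ℂ) ⊗ₖ M₂ a₂ x₂) * ρ).trace := by
        intro x₁
        push_cast
        simp_rw [hBorn]
        rw [← Matrix.trace_sum, ← Finset.sum_mul, ← kron_sum_left, hM₁sum x₁]
      have := (key x₁).trans (key x₁').symm
      exact_mod_cast this
end

section
/- Let p̃ and p̃' be N-partite non-signalling conditional quasiprobability distributions on outcomes ∏ₖ Fin Aₖ given inputs ∏ₖ Fin Xₖ. Suppose for every subset S ⊆ Fin N and every choice of outcomes a_i < Aᵢ−1 for i ∈ S and inputs x_i for i ∈ S, the marginals agree: p̃(a_S|x_S) = p̃'(a_S|x_S). Then p̃ = p̃'. -/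
open Finset

/-- Lemma 1 (N-partite): two non-signalling conditional quasiprobability
distributions agreeing on all marginals with non-maximal outcomes are equal. -/
theorem stmt10 {N : ℕ} {A X : Fin N → ℕ}
    (p q : (∀ k, Fin (A k)) → (∀ k, Fin (X k)) → ℝ)
    (hpnorm : ∀ x, ∑ a, p a x = 1) (hqnorm : ∀ x, ∑ a, q a x = 1)
    (hpNS : ∀ (k : Fin N) (a : ∀ j, Fin (A j)) (x x' : ∀ j, Fin (X j)),
      (∀ j, j ≠ k → x j = x' j) →
      ∑ b : Fin (A k), p (Function.update a k b) x =
      ∑ b : Fin (A k), p (Function.update a k b) x')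
    (hqNS : ∀ (k : Fin N) (a : ∀ j, Fin (A j)) (x x' : ∀ j, Fin (X j)),
      (∀ j, j ≠ k → x j = x' j) →
      ∑ b : Fin (A k), q (Function.update a k b) x =
      ∑ b : Fin (A k), q (Function.update a k b) x')
    (hmarg : ∀ (S : Finset (Fin N)) (a : ∀ j, Fin (A j)) (x : ∀ j, Fin (X j)),
      (∀ i ∈ S, ((a i : ℕ) < A i - 1)) →
      ∑ b ∈ Finset.univ.filter (fun b : ∀ j, Fin (A j) => ∀ i ∈ S, b i = a i), p b x =
      ∑ b ∈ Finset.univ.filter (fun b : ∀ j, Fin (A j) => ∀ i ∈ S, b i = a i), q b x) :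
    p = q := by
  classical
  have key : ∀ (n : ℕ) (S : Finset (Fin N)) (a : ∀ j, Fin (A j)) (x : ∀ j, Fin (X j)),
      (S.filter (fun i => ¬ ((a i : ℕ) < A i - 1))).card = n →
      ∑ b ∈ Finset.univ.filter (fun b : ∀ j, Fin (A j) => ∀ i ∈ S, b i = a i), p b x =
      ∑ b ∈ Finset.univ.filter (fun b : ∀ j, Fin (A j) => ∀ i ∈ S, b i = a i), q b x := by
    intro n
    induction n with
    | zero =>
      intro S a x hcard
      apply hmarg
      intro i hi
      by_contra h
      have hmem : i ∈ S.filter (fun i => ¬ ((a i : ℕ) < A i - 1)) :=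
        mem_filter.mpr ⟨hi, h⟩
      rw [card_eq_zero.mp hcard] at hmem
      exact notMem_empty i hmem
    | succ n ih =>
      intro S a x hcard
      obtain ⟨k, hk⟩ : ∃ k, k ∈ S.filter (fun i => ¬ ((a i : ℕ) < A i - 1)) :=
        card_pos.mp (by omega)
      obtain ⟨hkS, hkmax⟩ := mem_filter.mp hk
      have hak : (a k : ℕ) = A k - 1 := by
        have := (a k).isLt; omega
      -- filter sets as fibers over the value at k
      have hfib : ∀ c : Fin (A k),
          (Finset.univ.filter (fun b : ∀ j, Fin (A j) => ∀ i ∈ S.erase k, b i = a i)).filter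
            (fun b => b k = c)
          = Finset.univ.filter
            (fun b : ∀ j, Fin (A j) => ∀ i ∈ S, b i = Function.update a k c i) := by
        intro c
        ext b
        simp only [mem_filter, mem_univ, true_and, mem_erase]
        constructor
        · rintro ⟨hb, hbk⟩ i hiS
          rcases eq_or_ne i k with rfl | hik
          · simpa using hbk
          · rw [Function.update_of_ne hik]
            exact hb i ⟨hik, hiS⟩
        · intro hb
          constructor
          · intro i ⟨hik, hiS⟩
            have := hb i hiS
            rwa [Function.update_of_ne hik] at this
          · simpa using hb k hkS
      have fib : ∀ r : (∀ k, Fin (A k)) → (∀ k, Fin (X k)) → ℝ,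
          ∑ b ∈ Finset.univ.filter (fun b : ∀ j, Fin (A j) => ∀ i ∈ S.erase k, b i = a i),
            r b x
          = ∑ c : Fin (A k), ∑ b ∈ Finset.univ.filter
              (fun b : ∀ j, Fin (A j) => ∀ i ∈ S, b i = Function.update a k c i), r b x := by
        intro r
        rw [← Finset.sum_fiberwise
          (Finset.univ.filter (fun b : ∀ j, Fin (A j) => ∀ i ∈ S.erase k, b i = a i))
          (fun b => b k) (fun b => r b x)]
        exact Finset.sum_congr rfl fun c _ => by rw [hfib c]
      -- split off the c = a k term
      have split : ∀ r : (∀ k, Fin (A k)) → (∀ k, Fin (X k)) → ℝ,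
          ∑ b ∈ Finset.univ.filter (fun b : ∀ j, Fin (A j) => ∀ i ∈ S, b i = a i), r b x
          = (∑ b ∈ Finset.univ.filter
              (fun b : ∀ j, Fin (A j) => ∀ i ∈ S.erase k, b i = a i), r b x)
            - ∑ c ∈ Finset.univ.erase (a k), ∑ b ∈ Finset.univ.filter
              (fun b : ∀ j, Fin (A j) => ∀ i ∈ S, b i = Function.update a k c i), r b x := by
        intro r
        rw [fib r, ← Finset.add_sum_erase _ _ (mem_univ (a k))]
        have : Function.update a k (a k) = a := Function.update_eq_self k a
        rw [this]
        ring
      -- card for erase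
      have hcard1 : ((S.erase k).filter (fun i => ¬ ((a i : ℕ) < A i - 1))).card = n := by
        rw [Finset.filter_erase, Finset.card_erase_of_mem hk, hcard]
        omega
      -- card for updated a
      have hcard2 : ∀ c : Fin (A k), c ≠ a k →
          (S.filter (fun i => ¬ ((Function.update a k c i : ℕ) < A i - 1))).card = n := by
        intro c hc
        have hcval : (c : ℕ) < A k - 1 := by
          have h1 : (c : ℕ) ≠ A k - 1 := by
            intro h
            exact hc (Fin.ext (by rw [h, hak]))
          have := c.isLt; omega
        have hset : S.filter (fun i => ¬ ((Function.update a k c i : ℕ) < A i - 1))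
            = (S.filter (fun i => ¬ ((a i : ℕ) < A i - 1))).erase k := by
          ext i
          simp only [mem_filter, mem_erase]
          constructor
          · rintro ⟨hiS, hi⟩
            rcases eq_or_ne i k with rfl | hik
            · rw [Function.update_self] at hi
              exact absurd hcval hi
            · rw [Function.update_of_ne hik] at hi
              exact ⟨hik, hiS, hi⟩
          · rintro ⟨hik, hiS, hi⟩
            rw [Function.update_of_ne hik]
            exact ⟨hiS, hi⟩
        rw [hset, Finset.card_erase_of_mem hk, hcard]
        omega
      rw [split p, split q, ih (S.erase k) a x hcard1]
      congr 1
      apply Finset.sum_congr rfl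
      intro c hc
      exact ih S (Function.update a k c) x (hcard2 c (mem_erase.mp hc).1)
  funext a x
  have h := key (Finset.univ.filter
      (fun i => ¬ ((a i : ℕ) < A i - 1))).card Finset.univ a x rfl
  have hset : Finset.univ.filter (fun b : ∀ j, Fin (A j) => ∀ i ∈ Finset.univ, b i = a i)
      = {a} := by
    ext b
    simp [funext_iff]
  rw [hset] at h
  simpa using h
end

section
/- Any non-signalling bipartite conditional probability distribution p(a₁,a₂|x₁,x₂) lies in the affine hull of the product conditional probability distributions: there exist finitely many product distributions q_j(a₁,a₂|x₁,x₂) = q_j¹(a₁|x₁)·q_j²(a₂|x₂) (with each q_jᵏ a conditional probability distribution) and real coefficients c_j with ∑_j c_j = 1 such that p = ∑_j c_j q_j. -/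
lemma stmt12_aux {n : ℕ} (f : Fin n → ℝ) (hf : ∑ a, f a = 0) (a o : Fin n) :
    ∑ a', f a' * ((if a = a' then (1:ℝ) else 0) - (if a = o then 1 else 0)) = f a := by
  have h1 : ∑ a', f a' * (if a = a' then (1:ℝ) else 0) = f a := by
    simp [mul_ite]
  have h2 : ∑ a', f a' * (if a = o then (1:ℝ) else 0) = 0 := by
    rw [← Finset.sum_mul, hf, zero_mul]
  simp only [mul_sub, Finset.sum_sub_distrib, h1, h2, sub_zero]

lemma stmt12_pack {A₁ A₂ X₁ X₂ : ℕ} {ι : Type} [Fintype ι]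
    (C : ι → ℝ) (Q₁ : ι → Fin A₁ → Fin X₁ → ℝ) (Q₂ : ι → Fin A₂ → Fin X₂ → ℝ)
    (p : Fin A₁ → Fin A₂ → Fin X₁ → Fin X₂ → ℝ)
    (h1 : ∀ i a x, 0 ≤ Q₁ i a x) (h2 : ∀ i a x, 0 ≤ Q₂ i a x)
    (h3 : ∀ i x, ∑ a, Q₁ i a x = 1) (h4 : ∀ i x, ∑ a, Q₂ i a x = 1)
    (h5 : ∑ i, C i = 1)
    (h6 : ∀ a₁ a₂ x₁ x₂, p a₁ a₂ x₁ x₂ = ∑ i, C i * (Q₁ i a₁ x₁ * Q₂ i a₂ x₂)) :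
    ∃ (J : ℕ) (c : Fin J → ℝ)
      (q₁ : Fin J → Fin A₁ → Fin X₁ → ℝ) (q₂ : Fin J → Fin A₂ → Fin X₂ → ℝ),
      (∀ j a₁ x₁, 0 ≤ q₁ j a₁ x₁) ∧ (∀ j a₂ x₂, 0 ≤ q₂ j a₂ x₂) ∧
      (∀ j x₁, ∑ a₁, q₁ j a₁ x₁ = 1) ∧ (∀ j x₂, ∑ a₂, q₂ j a₂ x₂ = 1) ∧
      (∑ j, c j = 1) ∧
      (∀ a₁ a₂ x₁ x₂, p a₁ a₂ x₁ x₂ = ∑ j, c j * (q₁ j a₁ x₁ * q₂ j a₂ x₂)) := by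
  classical
  let e := (Fintype.equivFin ι).symm
  refine ⟨Fintype.card ι, fun j => C (e j), fun j => Q₁ (e j), fun j => Q₂ (e j),
    fun j a x => h1 _ a x, fun j a x => h2 _ a x, fun j x => h3 _ x, fun j x => h4 _ x,
    ?_, ?_⟩
  · rw [Equiv.sum_comp e C, h5]
  · intro a₁ a₂ x₁ x₂
    rw [h6 a₁ a₂ x₁ x₂, ← Equiv.sum_comp e (fun i => C i * (Q₁ i a₁ x₁ * Q₂ i a₂ x₂))]

/-- deterministic-style conditional distribution: output `a'` on input `x'`, else output `o`. -/
def stmt12_det {A X : ℕ} (o a' : Fin A) (x' : Fin X) : Fin A → Fin X → ℝ :=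
  fun a x => if x = x' then (if a = a' then 1 else 0) else (if a = o then 1 else 0)

lemma stmt12_det_nonneg {A X : ℕ} (o a' : Fin A) (x' : Fin X) (a : Fin A) (x : Fin X) :
    0 ≤ stmt12_det o a' x' a x := by
  unfold stmt12_det; split_ifs <;> norm_num

lemma stmt12_det_sum {A X : ℕ} (o a' : Fin A) (x' : Fin X) (x : Fin X) :
    ∑ a, stmt12_det o a' x' a x = 1 := by
  unfold stmt12_det
  split_ifs <;> simp

/-- Any non-signalling bipartite conditional probability distribution lies in the
affine hull of the product conditional probability distributions. -/
theorem stmt12 {A₁ A₂ X₁ X₂ : ℕ}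
    (hA₁ : 1 ≤ A₁) (hA₂ : 1 ≤ A₂) (hX₁ : 1 ≤ X₁) (hX₂ : 1 ≤ X₂)
    (p : Fin A₁ → Fin A₂ → Fin X₁ → Fin X₂ → ℝ)
    (hp0 : ∀ a₁ a₂ x₁ x₂, 0 ≤ p a₁ a₂ x₁ x₂)
    (hnorm : ∀ x₁ x₂, ∑ a₁, ∑ a₂, p a₁ a₂ x₁ x₂ = 1)
    (hNS2 : ∀ a₁ x₁ x₂ x₂', ∑ a₂, p a₁ a₂ x₁ x₂ = ∑ a₂, p a₁ a₂ x₁ x₂')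
    (hNS1 : ∀ a₂ x₂ x₁ x₁', ∑ a₁, p a₁ a₂ x₁ x₂ = ∑ a₁, p a₁ a₂ x₁' x₂) :
    ∃ (J : ℕ) (c : Fin J → ℝ)
      (q₁ : Fin J → Fin A₁ → Fin X₁ → ℝ) (q₂ : Fin J → Fin A₂ → Fin X₂ → ℝ),
      (∀ j a₁ x₁, 0 ≤ q₁ j a₁ x₁) ∧ (∀ j a₂ x₂, 0 ≤ q₂ j a₂ x₂) ∧
      (∀ j x₁, ∑ a₁, q₁ j a₁ x₁ = 1) ∧ (∀ j x₂, ∑ a₂, q₂ j a₂ x₂ = 1) ∧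
      (∑ j, c j = 1) ∧
      (∀ a₁ a₂ x₁ x₂, p a₁ a₂ x₁ x₂ = ∑ j, c j * (q₁ j a₁ x₁ * q₂ j a₂ x₂)) := by
  classical
  set o₁ : Fin A₁ := ⟨0, hA₁⟩ with ho₁
  set o₂ : Fin A₂ := ⟨0, hA₂⟩ with ho₂
  set y₁ : Fin X₁ := ⟨0, hX₁⟩ with hy₁
  set y₂ : Fin X₂ := ⟨0, hX₂⟩ with hy₂
  set p₁ : Fin A₁ → Fin X₁ → ℝ := fun a x => ∑ a₂, p a a₂ x y₂ with hp₁
  set p₂ : Fin A₂ → Fin X₂ → ℝ := fun a x => ∑ a₁, p a₁ a y₁ x with hp₂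
  set Δ : Fin A₁ → Fin A₂ → Fin X₁ → Fin X₂ → ℝ :=
    fun a₁ a₂ x₁ x₂ => p a₁ a₂ x₁ x₂ - p₁ a₁ x₁ * p₂ a₂ x₂ with hΔ
  have hp₁sum : ∀ x₁, ∑ a₁, p₁ a₁ x₁ = 1 := fun x₁ => hnorm x₁ y₂
  have hp₂sum : ∀ x₂, ∑ a₂, p₂ a₂ x₂ = 1 := by
    intro x₂
    rw [hp₂]
    rw [Finset.sum_comm]
    exact hnorm y₁ x₂
  have hp₁0 : ∀ a x, 0 ≤ p₁ a x := fun a x => Finset.sum_nonneg fun i _ => hp0 _ _ _ _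
  have hp₂0 : ∀ a x, 0 ≤ p₂ a x := fun a x => Finset.sum_nonneg fun i _ => hp0 _ _ _ _
  have hm1 : ∀ a₂ x₁ x₂, ∑ a₁, Δ a₁ a₂ x₁ x₂ = 0 := by
    intro a₂ x₁ x₂
    have h : ∑ a₁, p a₁ a₂ x₁ x₂ = p₂ a₂ x₂ := hNS1 a₂ x₂ x₁ y₁
    simp only [hΔ, Finset.sum_sub_distrib, h, ← Finset.sum_mul, hp₁sum x₁, one_mul, sub_self]
  have hm2 : ∀ a₁ x₁ x₂, ∑ a₂, Δ a₁ a₂ x₁ x₂ = 0 := by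
    intro a₁ x₁ x₂
    have h : ∑ a₂, p a₁ a₂ x₁ x₂ = p₁ a₁ x₁ := hNS2 a₁ x₁ x₂ y₂
    simp only [hΔ, Finset.sum_sub_distrib, h, ← Finset.mul_sum, hp₂sum x₂, mul_one, sub_self]
  let ι : Type := Unit ⊕ (Fin A₁ × Fin X₁ × Fin A₂ × Fin X₂ × Bool × Bool)
  let sgn : Bool → ℝ := fun b => if b then 1 else -1
  let C : ι → ℝ := fun i => match i with
    | Sum.inl _ => 1
    | Sum.inr (a₁, x₁, a₂, x₂, b₁, b₂) => Δ a₁ a₂ x₁ x₂ * sgn b₁ * sgn b₂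
  let Q₁ : ι → Fin A₁ → Fin X₁ → ℝ := fun i => match i with
    | Sum.inl _ => p₁
    | Sum.inr (a₁, x₁, _, _, b₁, _) => if b₁ then stmt12_det o₁ a₁ x₁ else stmt12_det o₁ o₁ x₁
  let Q₂ : ι → Fin A₂ → Fin X₂ → ℝ := fun i => match i with
    | Sum.inl _ => p₂
    | Sum.inr (_, _, a₂, x₂, _, b₂) => if b₂ then stmt12_det o₂ a₂ x₂ else stmt12_det o₂ o₂ x₂
  apply stmt12_pack C Q₁ Q₂ p
  · rintro (i | ⟨a₁', x₁', a₂', x₂', b₁, b₂⟩) a x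
    · exact hp₁0 a x
    · dsimp only [Q₁]; split_ifs <;> exact stmt12_det_nonneg _ _ _ _ _
  · rintro (i | ⟨a₁', x₁', a₂', x₂', b₁, b₂⟩) a x
    · exact hp₂0 a x
    · dsimp only [Q₂]; split_ifs <;> exact stmt12_det_nonneg _ _ _ _ _
  · rintro (i | ⟨a₁', x₁', a₂', x₂', b₁, b₂⟩) x
    · exact hp₁sum x
    · dsimp only [Q₁]; split_ifs <;> exact stmt12_det_sum _ _ _ _
  · rintro (i | ⟨a₁', x₁', a₂', x₂', b₁, b₂⟩) x
    · exact hp₂sum x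
    · dsimp only [Q₂]; split_ifs <;> exact stmt12_det_sum _ _ _ _
  · -- sum of coefficients is 1
    rw [Fintype.sum_sum_type]
    have h1 : ∑ i : Unit, C (Sum.inl i) = 1 := by simp [C]
    rw [h1]
    have z : ∑ v : Fin A₁ × Fin X₁ × Fin A₂ × Fin X₂ × Bool × Bool, C (Sum.inr v) = 0 := by
      rw [Fintype.sum_prod_type]
      apply Finset.sum_eq_zero; intro a₁' _
      rw [Fintype.sum_prod_type]
      apply Finset.sum_eq_zero; intro x₁' _
      rw [Fintype.sum_prod_type]
      apply Finset.sum_eq_zero; intro a₂' _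
      rw [Fintype.sum_prod_type]
      apply Finset.sum_eq_zero; intro x₂' _
      rw [Fintype.sum_prod_type]
      simp [Fintype.sum_bool, C, sgn]
    rw [z, add_zero]
  · -- the representation
    intro a₁ a₂ x₁ x₂
    rw [Fintype.sum_sum_type]
    have hunit : ∑ i : Unit, C (Sum.inl i) * (Q₁ (Sum.inl i) a₁ x₁ * Q₂ (Sum.inl i) a₂ x₂)
        = p₁ a₁ x₁ * p₂ a₂ x₂ := by simp [C, Q₁, Q₂]
    have step1 : ∀ (a₁' : Fin A₁) (x₁' : Fin X₁) (a₂' : Fin A₂) (x₂' : Fin X₂),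
        (∑ b₁ : Bool, ∑ b₂ : Bool,
          C (Sum.inr (a₁', x₁', a₂', x₂', b₁, b₂)) *
            (Q₁ (Sum.inr (a₁', x₁', a₂', x₂', b₁, b₂)) a₁ x₁ *
             Q₂ (Sum.inr (a₁', x₁', a₂', x₂', b₁, b₂)) a₂ x₂))
        = Δ a₁' a₂' x₁' x₂' *
            ((stmt12_det o₁ a₁' x₁' a₁ x₁ - stmt12_det o₁ o₁ x₁' a₁ x₁) *
             (stmt12_det o₂ a₂' x₂' a₂ x₂ - stmt12_det o₂ o₂ x₂' a₂ x₂)) := by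
      intro a₁' x₁' a₂' x₂'
      simp [Fintype.sum_bool, C, Q₁, Q₂, sgn]
      ring
    have hd1 : ∀ (a₁' : Fin A₁) (x₁' : Fin X₁),
        stmt12_det o₁ a₁' x₁' a₁ x₁ - stmt12_det o₁ o₁ x₁' a₁ x₁
        = (if x₁ = x₁' then (1:ℝ) else 0) *
          ((if a₁ = a₁' then (1:ℝ) else 0) - (if a₁ = o₁ then 1 else 0)) := by
      intro a₁' x₁'
      unfold stmt12_det
      split_ifs <;> ring
    have hd2 : ∀ (a₂' : Fin A₂) (x₂' : Fin X₂),
        stmt12_det o₂ a₂' x₂' a₂ x₂ - stmt12_det o₂ o₂ x₂' a₂ x₂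
        = (if x₂ = x₂' then (1:ℝ) else 0) *
          ((if a₂ = a₂' then (1:ℝ) else 0) - (if a₂ = o₂ then 1 else 0)) := by
      intro a₂' x₂'
      unfold stmt12_det
      split_ifs <;> ring
    have hrest : ∑ v : Fin A₁ × Fin X₁ × Fin A₂ × Fin X₂ × Bool × Bool,
        C (Sum.inr v) * (Q₁ (Sum.inr v) a₁ x₁ * Q₂ (Sum.inr v) a₂ x₂)
        = Δ a₁ a₂ x₁ x₂ := by
      calc ∑ v : Fin A₁ × Fin X₁ × Fin A₂ × Fin X₂ × Bool × Bool,
            C (Sum.inr v) * (Q₁ (Sum.inr v) a₁ x₁ * Q₂ (Sum.inr v) a₂ x₂)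
          = ∑ a₁' : Fin A₁, ∑ x₁' : Fin X₁, ∑ a₂' : Fin A₂, ∑ x₂' : Fin X₂,
              (if x₁ = x₁' then (1:ℝ) else 0) * ((if x₂ = x₂' then (1:ℝ) else 0) *
               (Δ a₁' a₂' x₁' x₂' *
                 (((if a₁ = a₁' then (1:ℝ) else 0) - (if a₁ = o₁ then 1 else 0)) *
                  ((if a₂ = a₂' then (1:ℝ) else 0) - (if a₂ = o₂ then 1 else 0))))) := by
            rw [Fintype.sum_prod_type]
            apply Finset.sum_congr rfl; intro a₁' _
            rw [Fintype.sum_prod_type]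
            apply Finset.sum_congr rfl; intro x₁' _
            rw [Fintype.sum_prod_type]
            apply Finset.sum_congr rfl; intro a₂' _
            rw [Fintype.sum_prod_type]
            apply Finset.sum_congr rfl; intro x₂' _
            rw [Fintype.sum_prod_type, step1 a₁' x₁' a₂' x₂', hd1, hd2]
            ring
        _ = ∑ a₁' : Fin A₁, ∑ a₂' : Fin A₂,
              Δ a₁' a₂' x₁ x₂ *
                (((if a₁ = a₁' then (1:ℝ) else 0) - (if a₁ = o₁ then 1 else 0)) *
                 ((if a₂ = a₂' then (1:ℝ) else 0) - (if a₂ = o₂ then 1 else 0))) := by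
            simp [ite_mul, mul_ite, Finset.sum_ite_eq, Finset.sum_ite_irrel]
        _ = Δ a₁ a₂ x₁ x₂ := by
            have inner : ∀ a₁' : Fin A₁,
                ∑ a₂' : Fin A₂, Δ a₁' a₂' x₁ x₂ *
                  (((if a₁ = a₁' then (1:ℝ) else 0) - (if a₁ = o₁ then 1 else 0)) *
                   ((if a₂ = a₂' then (1:ℝ) else 0) - (if a₂ = o₂ then 1 else 0)))
                = ((if a₁ = a₁' then (1:ℝ) else 0) - (if a₁ = o₁ then 1 else 0)) *
                  Δ a₁' a₂ x₁ x₂ := by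
              intro a₁'
              have h := stmt12_aux (fun a => Δ a₁' a x₁ x₂) (hm2 a₁' x₁ x₂) a₂ o₂
              calc ∑ a₂' : Fin A₂, Δ a₁' a₂' x₁ x₂ *
                    (((if a₁ = a₁' then (1:ℝ) else 0) - (if a₁ = o₁ then 1 else 0)) *
                     ((if a₂ = a₂' then (1:ℝ) else 0) - (if a₂ = o₂ then 1 else 0)))
                  = ((if a₁ = a₁' then (1:ℝ) else 0) - (if a₁ = o₁ then 1 else 0)) *
                    ∑ a₂' : Fin A₂, Δ a₁' a₂' x₁ x₂ *
                      ((if a₂ = a₂' then (1:ℝ) else 0) - (if a₂ = o₂ then 1 else 0)) := by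
                    rw [Finset.mul_sum]
                    apply Finset.sum_congr rfl; intro a₂' _; ring
                _ = ((if a₁ = a₁' then (1:ℝ) else 0) - (if a₁ = o₁ then 1 else 0)) *
                    Δ a₁' a₂ x₁ x₂ := by rw [h]
            simp only [inner]
            have h2 := stmt12_aux (fun a => Δ a a₂ x₁ x₂) (hm1 a₂ x₁ x₂) a₁ o₁
            rw [← h2]
            apply Finset.sum_congr rfl; intro a₁' _; ring
    rw [hunit, hrest, hΔ]
    ring
end

section
/- Let p(a₁,a₂|x₁,x₂) be a non-signalling bipartite conditional probability distribution and let p', defined by the Theorem 1 construction p'(a₁,a₂|x₁,x₂) = ∑_{λ₁,λ₂} p̃₁(a₁|x₁,λ₁)·p̃₂(a₂|x₂,λ₂)·q(λ₁,λ₂) with q((a₁',x₁'),(a₂',x₂')) = p(a₁',a₂'|x₁',x₂')/(X₁X₂) and p̃ₖ as the quasi-deterministic distributions of that construction. Then for all a₁ < A₁−1 and a₂ < A₂−1: p'(a₁,a₂|x₁,x₂) = p(a₁,a₂|x₁,x₂), and the one-party marginals agree: ∑_{a₂} p'(a₁,a₂|x₁,x₂) = ∑_{a₂} p(a₁,a₂|x₁,x₂)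 for a₁ < A₁−1, and symmetrically. -/
lemma qmeas_pick {A X : ℕ} (a : Fin A) (x : Fin X) (h : (a : ℕ) < A - 1)
    (f : Fin A × Fin X → ℝ) :
    ∑ lam : Fin A × Fin X, qmeas A X a x lam * f lam = (X : ℝ) * f (a, x) := by
  simp only [qmeas, if_pos h]
  rw [Finset.sum_eq_single (a, x)]
  · simp
  · intro b _ hb; simp [hb]
  · simp

lemma qmeas_sum_one {A X : ℕ} (hA : 0 < A) (x : Fin X) (lam : Fin A × Fin X) :
    ∑ a : Fin A, qmeas A X a x lam = 1 := by
  obtain ⟨n, rfl⟩ : ∃ n, A = n + 1 := ⟨A - 1, (Nat.succ_pred_eq_of_pos hA).symm⟩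
  simp only [qmeas, Nat.add_sub_cancel]
  have hlast : ¬ ((Fin.last n : ℕ) < n) := by simp
  have hsum : ∀ g : Fin (n + 1) → ℝ,
      (∑ a : Fin (n + 1), if (a : ℕ) < n then g a else 0)
        = ∑ i : Fin n, g i.castSucc := by
    intro g
    rw [Fin.sum_univ_castSucc, if_neg hlast]
    simp [Fin.is_lt]
  rw [Fin.sum_univ_castSucc, if_neg hlast]
  have h2 : (∑ i : Fin n,
      if ((i.castSucc : Fin (n+1)) : ℕ) < n then
        (if lam = (i.castSucc, x) then (X : ℝ) else 0)
      else 1 - ∑ a' : Fin (n+1),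
        (if (a' : ℕ) < n then (if lam = (a', x) then (X : ℝ) else 0) else 0))
      = ∑ i : Fin n, (if lam = (i.castSucc, x) then (X : ℝ) else 0) :=
    Finset.sum_congr rfl fun i _ => if_pos i.is_lt
  rw [h2, hsum (fun a => if lam = (a, x) then (X : ℝ) else 0)]
  ring

/-- The Theorem 1 construction reproduces the restricted values and one-party
marginals of the original non-signalling distribution. -/
theorem stmt17 {A₁ A₂ X₁ X₂ : ℕ}
    (p : Fin A₁ → Fin A₂ → Fin X₁ → Fin X₂ → ℝ)
    (hp0 : ∀ a₁ a₂ x₁ x₂, 0 ≤ p a₁ a₂ x₁ x₂)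
    (hnorm : ∀ x₁ x₂, ∑ a₁, ∑ a₂, p a₁ a₂ x₁ x₂ = 1)
    (hNS2 : ∀ a₁ x₁ x₂ x₂', ∑ a₂, p a₁ a₂ x₁ x₂ = ∑ a₂, p a₁ a₂ x₁ x₂')
    (hNS1 : ∀ a₂ x₂ x₁ x₁', ∑ a₁, p a₁ a₂ x₁ x₂ = ∑ a₁, p a₁ a₂ x₁' x₂)
    (p' : Fin A₁ → Fin A₂ → Fin X₁ → Fin X₂ → ℝ)
    (hp' : ∀ a₁ a₂ x₁ x₂, p' a₁ a₂ x₁ x₂ =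
      ∑ l₁ : Fin A₁ × Fin X₁, ∑ l₂ : Fin A₂ × Fin X₂,
        qmeas A₁ X₁ a₁ x₁ l₁ * qmeas A₂ X₂ a₂ x₂ l₂ *
          (p l₁.1 l₂.1 l₁.2 l₂.2 / ((X₁ : ℝ) * (X₂ : ℝ)))) :
    (∀ (a₁ : Fin A₁) (a₂ : Fin A₂) (x₁ : Fin X₁) (x₂ : Fin X₂), (a₁ : ℕ) < A₁ - 1 → (a₂ : ℕ) < A₂ - 1 →
      p' a₁ a₂ x₁ x₂ = p a₁ a₂ x₁ x₂) ∧
    (∀ (a₁ : Fin A₁) (x₁ : Fin X₁) (x₂ : Fin X₂), (a₁ : ℕ) < A₁ - 1 →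
      ∑ a₂, p' a₁ a₂ x₁ x₂ = ∑ a₂, p a₁ a₂ x₁ x₂) ∧
    (∀ (a₂ : Fin A₂) (x₂ : Fin X₂) (x₁ : Fin X₁), (a₂ : ℕ) < A₂ - 1 →
      ∑ a₁, p' a₁ a₂ x₁ x₂ = ∑ a₁, p a₁ a₂ x₁ x₂) := by
  refine ⟨?_, ?_, ?_⟩
  · -- restricted values
    intro a₁ a₂ x₁ x₂ h₁ h₂
    have hX₁ : (X₁ : ℝ) ≠ 0 := Nat.cast_ne_zero.mpr x₁.pos.ne'
    have hX₂ : (X₂ : ℝ) ≠ 0 := Nat.cast_ne_zero.mpr x₂.pos.ne'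
    rw [hp']
    have step1 : ∀ l₁ : Fin A₁ × Fin X₁,
        (∑ l₂ : Fin A₂ × Fin X₂,
          qmeas A₁ X₁ a₁ x₁ l₁ * qmeas A₂ X₂ a₂ x₂ l₂ *
            (p l₁.1 l₂.1 l₁.2 l₂.2 / ((X₁ : ℝ) * (X₂ : ℝ))))
        = qmeas A₁ X₁ a₁ x₁ l₁ *
            ((X₂ : ℝ) * (p l₁.1 a₂ l₁.2 x₂ / ((X₁ : ℝ) * (X₂ : ℝ)))) := by
      intro l₁
      rw [← qmeas_pick a₂ x₂ h₂ (fun l₂ => p l₁.1 l₂.1 l₁.2 l₂.2 / ((X₁ : ℝ) * (X₂ : ℝ))),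
        Finset.mul_sum]
      apply Finset.sum_congr rfl; intro l₂ _; ring
    rw [Finset.sum_congr rfl (fun l₁ _ => step1 l₁),
      qmeas_pick a₁ x₁ h₁]
    field_simp
  · -- marginal over a₂
    intro a₁ x₁ x₂ h₁
    have hX₁ : (X₁ : ℝ) ≠ 0 := Nat.cast_ne_zero.mpr x₁.pos.ne'
    have hX₂ : (X₂ : ℝ) ≠ 0 := Nat.cast_ne_zero.mpr x₂.pos.ne'
    have hA₂ : 0 < A₂ := Nat.pos_of_ne_zero
      (fun h => by subst h; simpa using hnorm x₁ x₂)
    classical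
    calc ∑ a₂, p' a₁ a₂ x₁ x₂
        = ∑ l₁ : Fin A₁ × Fin X₁, qmeas A₁ X₁ a₁ x₁ l₁ *
            (∑ l₂ : Fin A₂ × Fin X₂, p l₁.1 l₂.1 l₁.2 l₂.2 / ((X₁ : ℝ) * (X₂ : ℝ))) := by
          simp only [hp']
          rw [Finset.sum_comm]
          apply Finset.sum_congr rfl; intro l₁ _
          rw [Finset.mul_sum, Finset.sum_comm]
          apply Finset.sum_congr rfl; intro l₂ _
          rw [← Finset.sum_mul, ← Finset.mul_sum, qmeas_sum_one hA₂ x₂ l₂]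
          ring
      _ = (X₁ : ℝ) * (∑ l₂ : Fin A₂ × Fin X₂, p a₁ l₂.1 x₁ l₂.2 / ((X₁ : ℝ) * (X₂ : ℝ))) := by
          rw [qmeas_pick a₁ x₁ h₁]
      _ = ∑ a₂, p a₁ a₂ x₁ x₂ := by
          rw [← Finset.sum_div, Fintype.sum_prod_type]
          have : ∀ a₂' : Fin A₂, ∑ x₂' : Fin X₂, p a₁ a₂' x₁ x₂'
              = ∑ x₂' : Fin X₂, p a₁ a₂' x₁ x₂' := fun _ => rfl
          have hswap : (∑ a₂' : Fin A₂, ∑ x₂' : Fin X₂, p a₁ a₂' x₁ x₂')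
              = ∑ x₂' : Fin X₂, ∑ a₂' : Fin A₂, p a₁ a₂' x₁ x₂' := by rw [Finset.sum_comm]
          rw [hswap]
          have hns : ∀ x₂' : Fin X₂, (∑ a₂' : Fin A₂, p a₁ a₂' x₁ x₂')
              = ∑ a₂' : Fin A₂, p a₁ a₂' x₁ x₂ := fun x₂' => hNS2 a₁ x₁ x₂' x₂
          rw [Finset.sum_congr rfl (fun x₂' _ => hns x₂'), Finset.sum_const,
            Finset.card_univ, Fintype.card_fin, nsmul_eq_mul]
          field_simp
  · -- marginal over a₁
    intro a₂ x₂ x₁ h₂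
    have hX₁ : (X₁ : ℝ) ≠ 0 := Nat.cast_ne_zero.mpr x₁.pos.ne'
    have hX₂ : (X₂ : ℝ) ≠ 0 := Nat.cast_ne_zero.mpr x₂.pos.ne'
    have hA₁ : 0 < A₁ := Nat.pos_of_ne_zero
      (fun h => by subst h; simpa using hnorm x₁ x₂)
    classical
    calc ∑ a₁, p' a₁ a₂ x₁ x₂
        = ∑ l₂ : Fin A₂ × Fin X₂, qmeas A₂ X₂ a₂ x₂ l₂ *
            (∑ l₁ : Fin A₁ × Fin X₁, p l₁.1 l₂.1 l₁.2 l₂.2 / ((X₁ : ℝ) * (X₂ : ℝ))) := by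
          simp only [hp']
          rw [Finset.sum_comm]
          have step : ∀ l₁ : Fin A₁ × Fin X₁,
              (∑ a₁, ∑ l₂ : Fin A₂ × Fin X₂,
                qmeas A₁ X₁ a₁ x₁ l₁ * qmeas A₂ X₂ a₂ x₂ l₂ *
                  (p l₁.1 l₂.1 l₁.2 l₂.2 / ((X₁ : ℝ) * (X₂ : ℝ))))
              = ∑ l₂ : Fin A₂ × Fin X₂, qmeas A₂ X₂ a₂ x₂ l₂ *
                  (p l₁.1 l₂.1 l₁.2 l₂.2 / ((X₁ : ℝ) * (X₂ : ℝ))) := by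
            intro l₁
            rw [Finset.sum_comm]
            apply Finset.sum_congr rfl; intro l₂ _
            have : (∑ a₁, qmeas A₁ X₁ a₁ x₁ l₁ * qmeas A₂ X₂ a₂ x₂ l₂ *
                (p l₁.1 l₂.1 l₁.2 l₂.2 / ((X₁ : ℝ) * (X₂ : ℝ))))
              = (∑ a₁, qmeas A₁ X₁ a₁ x₁ l₁) * (qmeas A₂ X₂ a₂ x₂ l₂ *
                (p l₁.1 l₂.1 l₁.2 l₂.2 / ((X₁ : ℝ) * (X₂ : ℝ)))) := by
              rw [Finset.sum_mul]
              apply Finset.sum_congr rfl; intro a₁ _; ring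
            rw [this, qmeas_sum_one hA₁ x₁ l₁, one_mul]
          rw [Finset.sum_congr rfl (fun l₁ _ => step l₁), Finset.sum_comm]
          apply Finset.sum_congr rfl; intro l₂ _
          rw [Finset.mul_sum]
      _ = (X₂ : ℝ) * (∑ l₁ : Fin A₁ × Fin X₁, p l₁.1 a₂ l₁.2 x₂ / ((X₁ : ℝ) * (X₂ : ℝ))) := by
          rw [qmeas_pick a₂ x₂ h₂]
      _ = ∑ a₁, p a₁ a₂ x₁ x₂ := by
          rw [← Finset.sum_div, Fintype.sum_prod_type]
          have hswap : (∑ a₁' : Fin A₁, ∑ x₁' : Fin X₁, p a₁' a₂ x₁' x₂)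
              = ∑ x₁' : Fin X₁, ∑ a₁' : Fin A₁, p a₁' a₂ x₁' x₂ := by rw [Finset.sum_comm]
          rw [hswap]
          have hns : ∀ x₁' : Fin X₁, (∑ a₁' : Fin A₁, p a₁' a₂ x₁' x₂)
              = ∑ a₁' : Fin A₁, p a₁' a₂ x₁ x₂ := fun x₁' => hNS1 a₂ x₂ x₁' x₁
          rw [Finset.sum_congr rfl (fun x₁' _ => hns x₁'), Finset.sum_const,
            Finset.card_univ, Fintype.card_fin, nsmul_eq_mul]
          field_simp
end

section
/- The number of free real parameters of a bipartite non-signalling conditional probability distribution with Aₖ outcomes and Xₖ inputs per site (k = 1,2) is at most ((A₁−1)X₁+1)·((A₂−1)X₂+1) − 1: the map sending a non-signalling distribution p to the tuple of values (p(a₁,a₂|x₁,x₂) for a₁<A₁−1, a₂<A₂−1; marginals p(a₁|x₁) for a₁<A₁−1; marginals p(a₂|x₂) for a₂<A₂−1) is injective on the set of non-signalling conditional quasiprobability distributions. -/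
/-- Helper: if two real functions on `Fin n` have equal total sums and agree on
all indices with value `< n - 1`, they agree everywhere. -/
lemma aux19 {n : ℕ} (f g : Fin n → ℝ) (hsum : ∑ i, f i = ∑ i, g i)
    (h : ∀ i : Fin n, (i : ℕ) < n - 1 → f i = g i) (i : Fin n) : f i = g i := by
  by_cases hi : (i : ℕ) < n - 1
  · exact h i hi
  · have he : ∑ j ∈ Finset.univ.erase i, f j = ∑ j ∈ Finset.univ.erase i, g j := by
      refine Finset.sum_congr rfl fun j hj => h j ?_
      have hji : j ≠ i := (Finset.mem_erase.mp hj).1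
      have hne : (j : ℕ) ≠ (i : ℕ) := fun hc => hji (Fin.ext hc)
      have := j.isLt; have := i.isLt
      omega
    have hf := Finset.sum_erase_add Finset.univ f (Finset.mem_univ i)
    have hg := Finset.sum_erase_add Finset.univ g (Finset.mem_univ i)
    linarith

/-- The map sending a non-signalling conditional quasiprobability distribution to
its restricted values and marginals is injective on the set of non-signalling
distributions; hence there are at most ((A₁−1)X₁+1)((A₂−1)X₂+1) − 1 free
parameters. -/
theorem stmt19 {A₁ A₂ X₁ X₂ : ℕ} (hX₁ : 1 ≤ X₁) (hX₂ : 1 ≤ X₂) :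
    Set.InjOn
      (fun p : Fin A₁ → Fin A₂ → Fin X₁ → Fin X₂ → ℝ =>
        (fun (a₁ : Fin A₁) (a₂ : Fin A₂) (x₁ : Fin X₁) (x₂ : Fin X₂) =>
            if (a₁ : ℕ) < A₁ - 1 ∧ (a₂ : ℕ) < A₂ - 1 then p a₁ a₂ x₁ x₂ else 0,
          fun (a₁ : Fin A₁) (x₁ : Fin X₁) =>
            if (a₁ : ℕ) < A₁ - 1 then ∑ a₂, p a₁ a₂ x₁ ⟨0, hX₂⟩ else 0,
          fun (a₂ : Fin A₂) (x₂ : Fin X₂) =>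
            if (a₂ : ℕ) < A₂ - 1 then ∑ a₁, p a₁ a₂ ⟨0, hX₁⟩ x₂ else 0))
      {p | (∀ x₁ x₂, ∑ a₁, ∑ a₂, p a₁ a₂ x₁ x₂ = 1) ∧
           (∀ a₁ x₁ x₂ x₂', ∑ a₂, p a₁ a₂ x₁ x₂ = ∑ a₂, p a₁ a₂ x₁ x₂') ∧
           (∀ a₂ x₂ x₁ x₁', ∑ a₁, p a₁ a₂ x₁ x₂ = ∑ a₁, p a₁ a₂ x₁' x₂)} := by
  rintro p ⟨hp1, hp2, hp3⟩ q ⟨hq1, hq2, hq3⟩ heq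
  simp only [Prod.mk.injEq] at heq
  obtain ⟨h1, h2, h3⟩ := heq
  have h1' : ∀ (a₁ : Fin A₁) (a₂ : Fin A₂) (x₁ : Fin X₁) (x₂ : Fin X₂), (a₁ : ℕ) < A₁ - 1 → (a₂ : ℕ) < A₂ - 1 →
      p a₁ a₂ x₁ x₂ = q a₁ a₂ x₁ x₂ := by
    intro a₁ a₂ x₁ x₂ ha₁ ha₂
    have := congrFun (congrFun (congrFun (congrFun h1 a₁) a₂) x₁) x₂
    simpa [ha₁, ha₂] using this
  -- marginal over a₂ equality, for a₁ < A₁ - 1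
  have hm1 : ∀ (a₁ : Fin A₁) (x₁ : Fin X₁) (x₂ : Fin X₂), (a₁ : ℕ) < A₁ - 1 →
      ∑ a₂, p a₁ a₂ x₁ x₂ = ∑ a₂, q a₁ a₂ x₁ x₂ := by
    intro a₁ x₁ x₂ ha₁
    rw [hp2 a₁ x₁ x₂ ⟨0, hX₂⟩, hq2 a₁ x₁ x₂ ⟨0, hX₂⟩]
    have := congrFun (congrFun h2 a₁) x₁
    simpa [ha₁] using this
  -- marginal over a₁ equality, for a₂ < A₂ - 1
  have hm2 : ∀ (a₂ : Fin A₂) (x₁ : Fin X₁) (x₂ : Fin X₂), (a₂ : ℕ) < A₂ - 1 →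
      ∑ a₁, p a₁ a₂ x₁ x₂ = ∑ a₁, q a₁ a₂ x₁ x₂ := by
    intro a₂ x₁ x₂ ha₂
    rw [hp3 a₂ x₂ x₁ ⟨0, hX₁⟩, hq3 a₂ x₂ x₁ ⟨0, hX₁⟩]
    have := congrFun (congrFun h3 a₂) x₂
    simpa [ha₂] using this
  -- extend hm2 to all a₂
  have hm2' : ∀ (a₂ : Fin A₂) (x₁ : Fin X₁) (x₂ : Fin X₂), ∑ a₁, p a₁ a₂ x₁ x₂ = ∑ a₁, q a₁ a₂ x₁ x₂ := by
    intro a₂ x₁ x₂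
    refine aux19 (fun b => ∑ a₁, p a₁ b x₁ x₂) (fun b => ∑ a₁, q a₁ b x₁ x₂) ?_
      (fun b hb => hm2 b x₁ x₂ hb) a₂
    rw [Finset.sum_comm, Finset.sum_comm (s := Finset.univ) (t := Finset.univ)
      (f := fun a₂ a₁ => q a₁ a₂ x₁ x₂), hp1 x₁ x₂, hq1 x₁ x₂]
  -- full equality for a₁ < A₁ - 1
  have hfull1 : ∀ (a₁ : Fin A₁) (a₂ : Fin A₂) (x₁ : Fin X₁) (x₂ : Fin X₂), (a₁ : ℕ) < A₁ - 1 →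
      p a₁ a₂ x₁ x₂ = q a₁ a₂ x₁ x₂ := by
    intro a₁ a₂ x₁ x₂ ha₁
    exact aux19 (fun b => p a₁ b x₁ x₂) (fun b => q a₁ b x₁ x₂)
      (hm1 a₁ x₁ x₂ ha₁) (fun b hb => h1' a₁ b x₁ x₂ ha₁ hb) a₂
  funext a₁ a₂ x₁ x₂
  exact aux19 (fun b => p b a₂ x₁ x₂) (fun b => q b a₂ x₁ x₂)
    (hm2' a₂ x₁ x₂) (fun b hb => hfull1 b a₂ x₁ x₂ hb) a₁
end
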